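/- arXiv:1910.04360 — 3 statements merged into one kernel-verified Lean document; each statement's English description precedes it below -/
import Mathlib

section
/- Let 𝓜 be a class of set-systems. If 𝓜 is automatic, then 𝓜 has bounded decomposition-width: there is an integer K such that dw(M) ≤ K for every M ∈ 𝓜. -/
open scoped Classical

/-- A set-system: a finite ground set `E` together with a family `Ind` of subsets of `E`,
called the independent sets. -/
structure SetSystem (α : Type) where
  E : Finset α
  Ind : Set (Finset α)
  ind_subset : ∀ X ∈ Ind, X ⊆ E

namespace SetSystem

variable {α : Type}

/-- The relation `X ∼_U X'`: for every `Z ⊆ E − U`, `X ∪ Z` is independent iff `X' ∪ Z` is. -/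
def Eqv (S : SetSystem α) (U : Finset α) (X X' : Finset α) : Prop :=
  ∀ Z : Finset α, Z ⊆ S.E \ U → ((X ∪ Z) ∈ S.Ind ↔ (X' ∪ Z) ∈ S.Ind)

/-- `∼_U` as a setoid on the subsets of `U`. -/
def eqvSetoid (S : SetSystem α) (U : Finset α) : Setoid {X : Finset α // X ⊆ U} where
  r X X' := S.Eqv U X.1 X'.1
  iseqv := ⟨fun _ _ _ => Iff.rfl, fun h Z hZ => (h Z hZ).symm,
    fun h h' Z hZ => (h Z hZ).trans (h' Z hZ)⟩

/-- The number of equivalence classes of `∼_U` on the subsets of `U`. -/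
noncomputable def numClasses (S : SetSystem α) (U : Finset α) : ℕ :=
  Nat.card (Quotient (S.eqvSetoid U))

end SetSystem

/-- A decomposition of a finite ground set `E`: a subcubic tree (every vertex has degree
one or three) together with a bijection from `E` to the set of leaves (degree-one vertices). -/
structure Decomp (α : Type) (E : Finset α) where
  V : Type
  [fintypeV : Fintype V]
  [decEqV : DecidableEq V]
  G : SimpleGraph V
  [decAdj : DecidableRel G.Adj]
  isTree : G.IsTree
  subcubic : ∀ v : V, G.degree v = 1 ∨ G.degree v = 3
  leaf : α → V
  leaf_degree : ∀ a ∈ E, G.degree (leaf a) = 1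
  leaf_injOn : Set.InjOn leaf ↑E
  leaf_surj : ∀ v : V, G.degree v = 1 → ∃ a ∈ E, leaf a = v

namespace Decomp

attribute [instance] fintypeV decEqV decAdj

variable {α : Type} {E : Finset α}

/-- The set `U ⊆ E` is displayed by an edge `uv` of the decomposition: it consists of those
elements of `E` whose leaf lies in the component of `T − uv` containing `u`. -/
def Displays (D : Decomp α E) (U : Finset α) : Prop :=
  U ⊆ E ∧ ∃ u v : D.V, D.G.Adj u v ∧
    ∀ a ∈ E, (a ∈ U ↔ (D.G.deleteEdges {s(u, v)}).Reachable (D.leaf a) u)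

end Decomp

namespace SetSystem

variable {α : Type}

/-- The decomposition-width of a set-system: the least `k` such that some decomposition has
all displayed sets `U` with at most `k` equivalence classes under `∼_U`. -/
noncomputable def dw (S : SetSystem α) : ℕ :=
  sInf {k : ℕ | ∃ D : Decomp α S.E, ∀ U : Finset α, D.Displays U → S.numClasses U ≤ k}

end SetSystem

namespace Matroid

variable {α : Type}

/-- The set-system of independent sets of a matroid on a finite type. -/
noncomputable def toSetSystem [Fintype α] (M : Matroid α) : SetSystem α where
  E := M.E.toFinite.toFinset
  Ind := {X : Finset α | M.Indep ↑X}
  ind_subset := fun _X hX _a ha =>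
    (Set.Finite.mem_toFinset _).2 (hX.subset_ground (Finset.mem_coe.2 ha))

/-- The decomposition-width of a matroid. -/
noncomputable def dw [Fintype α] (M : Matroid α) : ℕ := M.toSetSystem.dw

/-- The rank of a set in a matroid: the largest size of an independent subset. -/
noncomputable def rank [Fintype α] (M : Matroid α) (U : Set α) : ℕ :=
  sSup {n : ℕ | ∃ X : Finset α, ↑X ⊆ U ∧ M.Indep ↑X ∧ X.card = n}

/-- The connectivity function `λ_M(U) = r(U) + r(E − U) − r(M)`. -/
noncomputable def lambda [Fintype α] (M : Matroid α) (U : Set α) : ℕ :=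
  M.rank U + M.rank (M.E \ U) - M.rank M.E

/-- The branch-width of a matroid: the least `k` such that some decomposition of the ground
set has `λ_M(U) + 1 ≤ k` for every displayed set `U`. -/
noncomputable def bw [Fintype α] (M : Matroid α) : ℕ :=
  sInf {k : ℕ | ∃ D : Decomp α M.toSetSystem.E,
    ∀ U : Finset α, D.Displays U → M.lambda ↑U + 1 ≤ k}

/-- Deletion of a set of elements from a matroid. -/
def del (M : Matroid α) (D : Set α) : Matroid α := M ↾ (M.E \ D)

/-- Contraction of a set of elements in a matroid, defined via duality. -/
def con (M : Matroid α) (C : Set α) : Matroid α := (M✶ ↾ (M.E \ C))✶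

/-- `N` is a minor of `M`: `N` is obtained from `M` by contractions and deletions. -/
def IsMinorOf (N M : Matroid α) : Prop :=
  ∃ C D : Set α, C ⊆ M.E ∧ D ⊆ M.E ∧ Disjoint C D ∧ N = (M.con C).del D

/-- A pigeonhole class of matroids: every subclass of bounded branch-width has bounded
decomposition-width. -/
def PigeonholeClass [Fintype α] (𝓜 : Set (Matroid α)) : Prop :=
  ∀ lam : ℕ, 0 < lam → ∃ ρ : ℕ, ∀ M ∈ 𝓜, M.bw ≤ lam → M.dw ≤ ρ

end Matroid

/-- A `Σ`-tree: a finite full binary tree with `Γ`-labelled vertices. -/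
inductive STree (Γ : Type) : Type
  | leaf : Γ → STree Γ
  | node : Γ → STree Γ → STree Γ → STree Γ

/-- A tree automaton with alphabet `Γ`, state set `Q`, accepting states `accept`, and
(partial) transition rules `δ0` and `δ2`. -/
structure TreeAut (Γ : Type) (Q : Type) where
  accept : Finset Q
  δ0 : Γ → Option (Finset Q)
  δ2 : Γ → Q → Q → Option (Finset Q)

namespace STree

variable {Γ : Type}

/-- The number of leaves of a tree. -/
def leafCount : STree Γ → ℕ
  | .leaf _ => 1
  | .node _ l r => l.leafCount + r.leafCount

/-- `Subtree s t` means `s` is the subtree of `t` rooted at one of the vertices of `t`. -/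
inductive Subtree : STree Γ → STree Γ → Prop
  | refl (t : STree Γ) : Subtree t t
  | left {s l r : STree Γ} {a : Γ} : Subtree s l → Subtree s (.node a l r)
  | right {s l r : STree Γ} {a : Γ} : Subtree s r → Subtree s (.node a l r)

/-- Relabel the vertices of a tree: each leaf label is transformed by `f` applied to its
left-to-right index (offset by the second argument), internal labels by `g`. -/
def relabel {Γ' : Type} (f : ℕ → Γ → Γ') (g : Γ → Γ') : STree Γ → ℕ → STree Γ'
  | .leaf a, k => .leaf (f k a)
  | .node a l r, k => .node (g a) (l.relabel f g k) (r.relabel f g (k + l.leafCount))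

end STree

namespace TreeAut

variable {Γ Q : Type}

/-- The run of a tree automaton on a `Σ`-tree, computed bottom-up: a leaf receives
`δ0` of its label, an internal vertex the union of `δ2` over pairs of states at its
children (the empty set if any needed transition is undefined). -/
noncomputable def run (A : TreeAut Γ Q) : STree Γ → Finset Q
  | .leaf a => (A.δ0 a).getD ∅
  | .node a l r =>
      if ∀ qL ∈ A.run l, ∀ qR ∈ A.run r, (A.δ2 a qL qR).isSome then
        (A.run l).biUnion fun qL => (A.run r).biUnion fun qR => (A.δ2 a qL qR).getD ∅
      else ∅

/-- The automaton accepts a tree if the set of states assigned to the root contains an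
accepting state. -/
def Accepts (A : TreeAut Γ Q) (t : STree Γ) : Prop :=
  ∃ q ∈ A.run t, q ∈ A.accept

/-- A deterministic automaton: every image of `δ0` and `δ2` is a singleton. -/
def Deterministic (A : TreeAut Γ Q) : Prop :=
  (∀ a s, A.δ0 a = some s → s.card = 1) ∧
    (∀ a q₁ q₂ s, A.δ2 a q₁ q₂ = some s → s.card = 1)

end TreeAut

/-- The alphabet `Σ ∪ Σ × {0,1}^I`. -/
abbrev EncAlph (Γ : Type) (I : Finset ℕ) : Type := Γ ⊕ Γ × ({j // j ∈ I} → Bool)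

/-- `enc(T, σ, φ, {Y_j}_{j ∈ I})`: relabel each leaf `v` of the tree with `(σ(v), s)`, where
`s(j) = 1` iff `φ⁻¹(v) ∈ Y_j`; internal vertices keep their labels. -/
noncomputable def enc {α Γ : Type} (E : Finset α) (t : STree Γ)
    (φ : {a // a ∈ E} ≃ Fin t.leafCount) (I : Finset ℕ)
    (Y : {j // j ∈ I} → Finset α) : STree (EncAlph Γ I) :=
  t.relabel
    (fun k a => Sum.inr (a, fun j =>
      if h : k < t.leafCount then
        decide ((φ.symm ⟨k, h⟩ : {a // a ∈ E}).1 ∈ Y j) else false))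
    Sum.inl 0

/-- An `I`-ary automaton: `δ0` is defined only on leaf labels from `Σ × {0,1}^I`. -/
def TreeAut.IsIary {Γ Q : Type} (I : Finset ℕ) (A : TreeAut (EncAlph Γ I) Q) : Prop :=
  ∀ a : Γ, A.δ0 (Sum.inl a) = none

/-- The set-system `M(A, T, σ, φ)` determined by an `{i}`-ary automaton `A` and a parse
tree: a subset `Y ⊆ E` is independent iff `A` accepts `enc(T, σ, φ, {Y})`. -/
noncomputable def systemOf {α Γ Q : Type} (i : ℕ) (A : TreeAut (EncAlph Γ {i}) Q)
    (E : Finset α) (t : STree Γ) (φ : {a // a ∈ E} ≃ Fin t.leafCount) : SetSystem α where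
  E := E
  Ind := {Y : Finset α | Y ⊆ E ∧ A.Accepts (enc E t φ {i} fun _ => Y)}
  ind_subset := fun _ hY => hY.1

/-- A class of set-systems is automatic: there is a single `{i}`-ary tree automaton which
recognises independence in every member, via a suitable parse tree for each member. -/
def Automatic {α : Type} (𝓜 : Set (SetSystem α)) : Prop :=
  ∃ (Γ : Type) (_ : Fintype Γ) (Q : Type) (_ : Fintype Q) (i : ℕ)
    (A : TreeAut (EncAlph Γ {i}) Q), A.IsIary {i} ∧
      ∀ S ∈ 𝓜, ∃ (t : STree Γ) (φ : {a // a ∈ S.E} ≃ Fin t.leafCount),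
        S = systemOf i A S.E t φ

/-- Formulas of counting monadic second-order logic `CMS₀`, with set variables `X_n`:
atomic formulas `Ind(X_i)`, `X_i ⊆ X_j` and `|X_i|_{p,q}`, closed under `¬`, `∧`, `∃`. -/
inductive CMS0 : Type
  | ind : ℕ → CMS0
  | subset : ℕ → ℕ → CMS0
  | card : ℕ → ℕ → ℕ → CMS0
  | not : CMS0 → CMS0
  | and : CMS0 → CMS0 → CMS0
  | ex : ℕ → CMS0 → CMS0

namespace CMS0

/-- The free variables of a `CMS₀` formula. -/
def free : CMS0 → Finset ℕ
  | .ind i => {i}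
  | .subset i j => {i, j}
  | .card i _ _ => {i}
  | .not φ => φ.free
  | .and φ ψ => φ.free ∪ ψ.free
  | .ex i φ => φ.free.erase i

/-- Satisfaction of a `CMS₀` formula by a set-system under an interpretation `θ` assigning
subsets of the ground set to variables. -/
def Sat {α : Type} (S : SetSystem α) (θ : ℕ → Finset α) : CMS0 → Prop
  | .ind i => θ i ∈ S.Ind
  | .subset i j => θ i ⊆ θ j
  | .card i p q => (θ i).card % q = p
  | .not φ => ¬ Sat S θ φ
  | .and φ ψ => Sat S θ φ ∧ Sat S θ ψ
  | .ex i φ => ∃ Y : Finset α, Y ⊆ S.E ∧ Sat S (Function.update θ i Y) φ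

end CMS0
namespace Aux

variable {Γ : Type}

lemma one_le_leafCount : ∀ t : STree Γ, 1 ≤ t.leafCount
  | .leaf _ => le_refl 1
  | .node _ l r => le_trans (one_le_leafCount l) (Nat.le_add_right _ _)

/-- One descending step. -/
def step (b : Bool) : STree Γ × ℕ → Option (STree Γ × ℕ)
  | (.leaf _, _) => none
  | (.node _ l r, k) => some (if b then (r, k + l.leafCount) else (l, k))

/-- Subtree and leaf-offset at a (deepest-first) position. -/
def pos? (t : STree Γ) : List Bool → Option (STree Γ × ℕ)
  | [] => some (t, 0)
  | b :: p => (pos? t p).bind (step b)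

lemma pos?_cons {t : STree Γ} {b : Bool} {p : List Bool} {s : STree Γ} {k : ℕ}
    (h : pos? t (b :: p) = some (s, k)) :
    ∃ a l r k', pos? t p = some (.node a l r, k') ∧
      ((b = false ∧ s = l ∧ k = k') ∨ (b = true ∧ s = r ∧ k = k' + l.leafCount)) := by
  rw [pos?] at h
  rcases hp : pos? t p with _ | ⟨s', k'⟩ <;> rw [hp] at h
  · simp at h
  rcases s' with γ | ⟨a, l, r⟩
  · simp [step] at h
  · cases b <;> simp [step] at h
    · obtain ⟨rfl, rfl⟩ := h
      exact ⟨a, l, r, k', rfl, Or.inl ⟨rfl, rfl, rfl⟩⟩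
    · obtain ⟨rfl, rfl⟩ := h
      exact ⟨a, l, r, k', rfl, Or.inr ⟨rfl, rfl, rfl⟩⟩

lemma pos?_cons_node {t : STree Γ} {b : Bool} {p : List Bool} {a : Γ} {l r : STree Γ} {k : ℕ}
    (h : pos? t p = some (.node a l r, k)) :
    pos? t (b :: p) = some (if b then r else l, if b then k + l.leafCount else k) := by
  cases b <;> simp [pos?, h, step]

lemma pos?_append (t : STree Γ) (q p : List Bool) :
    pos? t (q ++ p) = (pos? t p).bind fun x =>
      (pos? x.1 q).map fun y => (y.1, x.2 + y.2) := by
  induction q with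
  | nil =>
    rcases hp : pos? t p with _ | ⟨s, k⟩ <;> simp [hp, pos?]
  | cons b q ih =>
    have e1 : pos? t ((b :: q) ++ p) = (pos? t (q ++ p)).bind (step b) := rfl
    rw [e1, ih]
    rcases hp : pos? t p with _ | ⟨s, k⟩
    · simp
    have e2 : pos? s (b :: q) = (pos? s q).bind (step b) := rfl
    simp only [Option.bind_some, e2]
    rcases hq : pos? s q with _ | ⟨s', k'⟩
    · simp
    rcases s' with γ | ⟨a2, l, r⟩
    · simp [step]
    · cases b <;> simp [step, Nat.add_assoc]

lemma pos?_of_leaf {γ : Γ} : ∀ {p : List Bool} {x : STree Γ × ℕ},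
    pos? (.leaf γ) p = some x → p = [] ∧ x = (.leaf γ, 0) := by
  intro p x h
  cases p with
  | nil =>
    rw [pos?] at h
    exact ⟨rfl, (Option.some_injective _ h).symm⟩
  | cons b p =>
    obtain ⟨a, l, r, k', hp, -⟩ := pos?_cons h
    obtain ⟨-, h2⟩ := pos?_of_leaf hp
    simp at h2

lemma pos?_le (t : STree Γ) (p : List Bool) : ∀ (s : STree Γ) (k : ℕ),
    pos? t p = some (s, k) → k + s.leafCount ≤ t.leafCount := by
  induction p with
  | nil =>
    intro s k h
    simp [pos?] at h
    obtain ⟨rfl, rfl⟩ := h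
    omega
  | cons b p ih =>
    intro s k h
    obtain ⟨a, l, r, k', hp, hc⟩ := pos?_cons h
    have h2 := ih _ _ hp
    simp only [STree.leafCount] at h2
    rcases hc with ⟨rfl, rfl, rfl⟩ | ⟨rfl, rfl, rfl⟩ <;> omega

lemma map_shift {o : Option (STree Γ × ℕ)} {k : ℕ} {s : STree Γ} {m : ℕ}
    (h : (o.map fun y => (y.1, k + y.2)) = some (s, m)) :
    ∃ k', o = some (s, k') ∧ m = k + k' := by
  rcases o with _ | ⟨s', k'⟩ <;> simp at h
  exact ⟨k', by rw [h.1], h.2.symm⟩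

/-- The (deepest-first) position of the `m`-th leaf. -/
def leafPos : STree Γ → ℕ → List Bool
  | .leaf _, _ => []
  | .node _ l r, m =>
      if m < l.leafCount then leafPos l m ++ [false] else leafPos r (m - l.leafCount) ++ [true]

lemma pos?_false {a : Γ} {l r : STree Γ} :
    pos? (.node a l r) [false] = some (l, 0) := by simp [pos?, step]

lemma pos?_true {a : Γ} {l r : STree Γ} :
    pos? (.node a l r) [true] = some (r, l.leafCount) := by simp [pos?, step]

lemma pos?_leafPos : ∀ (t : STree Γ) (m : ℕ), m < t.leafCount →
    ∃ γ, pos? t (leafPos t m) = some (.leaf γ, m) := by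
  intro t
  induction t with
  | leaf γ =>
    intro m hm
    simp [STree.leafCount] at hm
    subst hm
    exact ⟨γ, rfl⟩
  | node a l r ihl ihr =>
    intro m hm
    simp only [STree.leafCount] at hm
    by_cases h : m < l.leafCount
    · obtain ⟨γ, hγ⟩ := ihl m h
      refine ⟨γ, ?_⟩
      rw [leafPos, if_pos h, pos?_append, pos?_false]
      simp [hγ]
    · obtain ⟨γ, hγ⟩ := ihr (m - l.leafCount) (by omega)
      refine ⟨γ, ?_⟩
      rw [leafPos, if_neg h, pos?_append, pos?_true]
      simp [hγ]
      omega

lemma leafPos_pos? : ∀ (t : STree Γ) (p : List Bool) (γ : Γ) (m : ℕ),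
    pos? t p = some (.leaf γ, m) → m < t.leafCount ∧ leafPos t m = p := by
  intro t
  induction t with
  | leaf γ₀ =>
    intro p γ m h
    obtain ⟨rfl, h2⟩ := pos?_of_leaf h
    simp only [Prod.mk.injEq] at h2
    obtain ⟨-, rfl⟩ := h2
    exact ⟨Nat.one_pos, rfl⟩
  | node a l r ihl ihr =>
    intro p γ m h
    rcases List.eq_nil_or_concat p with rfl | ⟨q, b, rfl⟩
    · simp [pos?] at h
    rw [List.concat_eq_append, pos?_append] at h
    cases b
    · rw [pos?_false] at h
      simp only [Option.bind_some] at h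
      obtain ⟨k', hq, hm⟩ := map_shift h
      obtain ⟨h1, h2⟩ := ihl _ _ _ hq
      refine ⟨by simp only [STree.leafCount]; omega, ?_⟩
      rw [leafPos, if_pos (by omega)]
      rw [show m = k' by omega, h2, List.concat_eq_append]
    · rw [pos?_true] at h
      simp only [Option.bind_some] at h
      obtain ⟨k', hq, hm⟩ := map_shift h
      obtain ⟨h1, h2⟩ := ihr _ _ _ hq
      refine ⟨by simp only [STree.leafCount]; omega, ?_⟩
      rw [leafPos, if_neg (by omega)]
      rw [show m - l.leafCount = k' by omega, h2, List.concat_eq_append]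

lemma pos?_trichotomy : ∀ (t : STree Γ) (p c : List Bool) (γ : Γ) (m : ℕ) (s : STree Γ) (k : ℕ),
    pos? t p = some (.leaf γ, m) → pos? t c = some (s, k) →
    c <:+ p ∨ m < k ∨ k + s.leafCount ≤ m := by
  intro t
  induction t with
  | leaf γ₀ =>
    intro p c γ m s k hp hc
    obtain ⟨rfl, -⟩ := pos?_of_leaf hp
    obtain ⟨rfl, -⟩ := pos?_of_leaf hc
    exact Or.inl List.nil_suffix
  | node a l r ihl ihr =>
    intro p c γ m s k hp hc
    rcases List.eq_nil_or_concat c with rfl | ⟨qc, bc, rfl⟩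
    · exact Or.inl List.nil_suffix
    rcases List.eq_nil_or_concat p with rfl | ⟨qp, bp, rfl⟩
    · simp [pos?] at hp
    rw [List.concat_eq_append, pos?_append] at hp hc
    cases bp <;> cases bc
    · rw [pos?_false] at hp hc
      simp only [Option.bind_some] at hp hc
      obtain ⟨k1, hq, hm⟩ := map_shift hp
      obtain ⟨k2, hq2, hk⟩ := map_shift hc
      rcases ihl _ _ _ _ _ _ hq hq2 with hsf | hlt | hge
      · obtain ⟨rr, rfl⟩ := hsf
        exact Or.inl ⟨rr, by simp⟩
      · exact Or.inr (Or.inl (by omega))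
      · exact Or.inr (Or.inr (by omega))
    · rw [pos?_false] at hp
      rw [pos?_true] at hc
      simp only [Option.bind_some] at hp hc
      obtain ⟨k1, hq, hm⟩ := map_shift hp
      obtain ⟨k2, hq2, hk⟩ := map_shift hc
      have h1 := pos?_le _ _ _ _ hq
      simp only [STree.leafCount] at h1
      exact Or.inr (Or.inl (by omega))
    · rw [pos?_true] at hp
      rw [pos?_false] at hc
      simp only [Option.bind_some] at hp hc
      obtain ⟨k1, hq, hm⟩ := map_shift hp
      obtain ⟨k2, hq2, hk⟩ := map_shift hc
      have h1 := pos?_le _ _ _ _ hq2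
      exact Or.inr (Or.inr (by omega))
    · rw [pos?_true] at hp hc
      simp only [Option.bind_some] at hp hc
      obtain ⟨k1, hq, hm⟩ := map_shift hp
      obtain ⟨k2, hq2, hk⟩ := map_shift hc
      rcases ihr _ _ _ _ _ _ hq hq2 with hsf | hlt | hge
      · obtain ⟨rr, rfl⟩ := hsf
        exact Or.inl ⟨rr, by simp⟩
      · exact Or.inr (Or.inl (by omega))
      · exact Or.inr (Or.inr (by omega))

lemma suffix_range {t : STree Γ} {p c : List Bool} {γ : Γ} {m : ℕ} {s : STree Γ} {k : ℕ}
    (hp : pos? t p = some (.leaf γ, m)) (hc : pos? t c = some (s, k)) (hsf : c <:+ p) :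
    k ≤ m ∧ m < k + s.leafCount := by
  obtain ⟨rr, rfl⟩ := hsf
  rw [pos?_append, hc] at hp
  simp only [Option.bind_some] at hp
  obtain ⟨k1, hq, hm⟩ := map_shift hp
  have h1 := pos?_le _ _ _ _ hq
  simp only [STree.leafCount] at h1
  omega

/-- All valid positions, as a list. -/
def posList : STree Γ → List (List Bool)
  | .leaf _ => [[]]
  | .node _ l r => [] :: ((posList l).map (· ++ [false]) ++ (posList r).map (· ++ [true]))

lemma mem_posList : ∀ (t : STree Γ) (p : List Bool), p ∈ posList t ↔ (pos? t p).isSome := by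
  intro t
  induction t with
  | leaf γ =>
    intro p
    simp only [posList, List.mem_singleton]
    constructor
    · rintro rfl; simp [pos?]
    · intro h
      rw [Option.isSome_iff_exists] at h
      obtain ⟨x, hx⟩ := h
      exact (pos?_of_leaf hx).1
  | node a l r ihl ihr =>
    intro p
    simp only [posList, List.mem_cons, List.mem_append, List.mem_map]
    constructor
    · rintro (rfl | ⟨q, hq, rfl⟩ | ⟨q, hq, rfl⟩)
      · simp [pos?]
      · rw [ihl] at hq
        rw [Option.isSome_iff_exists] at hq ⊢
        obtain ⟨⟨s, k⟩, hx⟩ := hq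
        exact ⟨(s, k), by rw [pos?_append, pos?_false]; simp [hx]⟩
      · rw [ihr] at hq
        rw [Option.isSome_iff_exists] at hq ⊢
        obtain ⟨⟨s, k⟩, hx⟩ := hq
        exact ⟨(s, l.leafCount + k), by rw [pos?_append, pos?_true]; simp [hx]⟩
    · intro h
      rcases List.eq_nil_or_concat p with rfl | ⟨q, b, rfl⟩
      · exact Or.inl rfl
      right
      rw [Option.isSome_iff_exists] at h
      obtain ⟨⟨s, k⟩, hx⟩ := h
      rw [List.concat_eq_append, pos?_append] at hx
      cases b
      · rw [pos?_false] at hx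
        simp only [Option.bind_some] at hx
        obtain ⟨k', hq, -⟩ := map_shift hx
        exact Or.inl ⟨q, by rw [ihl, Option.isSome_iff_exists]; exact ⟨_, hq⟩, List.concat_eq_append.symm⟩
      · rw [pos?_true] at hx
        simp only [Option.bind_some] at hx
        obtain ⟨k', hq, -⟩ := map_shift hx
        exact Or.inr ⟨q, by rw [ihr, Option.isSome_iff_exists]; exact ⟨_, hq⟩, List.concat_eq_append.symm⟩

lemma relabel_congr {Γ' : Type} (f f' : ℕ → Γ → Γ') (g : Γ → Γ') (s : STree Γ) :
    ∀ (k : ℕ), (∀ m a, k ≤ m → m < k + s.leafCount → f m a = f' m a) →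
      s.relabel f g k = s.relabel f' g k := by
  induction s with
  | leaf a =>
    intro k h
    simp only [STree.relabel]
    rw [h k a le_rfl (by simp only [STree.leafCount]; omega)]
  | node a l r ihl ihr =>
    intro k h
    simp only [STree.relabel]
    rw [ihl k (fun m x h1 h2 => h m x h1 (by simp only [STree.leafCount]; omega)),
        ihr (k + l.leafCount) (fun m x h1 h2 =>
          h m x (by omega) (by simp only [STree.leafCount]; omega))]

lemma run_node_congr {Γ' Q : Type} (A : TreeAut Γ' Q) (a : Γ') {L L' R R' : STree Γ'}
    (hL : A.run L = A.run L') (hR : A.run R = A.run R') :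
    A.run (.node a L R) = A.run (.node a L' R') := by
  simp only [TreeAut.run]
  rw [hL, hR]

lemma run_at {Γ' Q : Type} (A : TreeAut Γ' Q) (f f' : ℕ → Γ → Γ') (g : Γ → Γ')
    (t : STree Γ) (p : List Bool) :
    ∀ (s : STree Γ) (k : ℕ), pos? t p = some (s, k) →
    (∀ m a, (m < k ∨ k + s.leafCount ≤ m) → f m a = f' m a) →
    A.run (s.relabel f g k) = A.run (s.relabel f' g k) →
    A.run (t.relabel f g 0) = A.run (t.relabel f' g 0) := by
  induction p with
  | nil =>
    intro s k h hout hrun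
    simp [pos?] at h
    obtain ⟨rfl, rfl⟩ := h
    exact hrun
  | cons b p ih =>
    intro s k h hout hrun
    obtain ⟨a, l, r, k', hp, hc⟩ := pos?_cons h
    apply ih _ _ hp
    · intro m x hm
      apply hout
      simp only [STree.leafCount] at hm
      rcases hc with ⟨rfl, rfl, rfl⟩ | ⟨rfl, rfl, rfl⟩ <;> omega
    · simp only [STree.relabel]
      rcases hc with ⟨rfl, rfl, rfl⟩ | ⟨rfl, rfl, rfl⟩
      · refine run_node_congr A _ hrun (congrArg A.run (relabel_congr f f' g _ _ ?_))
        intro m x h1 h2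
        exact hout m x (Or.inr (by omega))
      · refine run_node_congr A _ (congrArg A.run (relabel_congr f f' g _ _ ?_)) hrun
        intro m x h1 h2
        exact hout m x (Or.inl (by omega))

lemma card_quot_le {C B : Type} (st : Setoid C) [Finite B] (f : C → B)
    (hf : ∀ x y : C, f x = f y → st.r x y) :
    Nat.card (Quotient st) ≤ Nat.card B := by
  apply Nat.card_le_card_of_injective (fun q => f q.out)
  intro x y hxy
  rw [← Quotient.out_eq x, ← Quotient.out_eq y]
  exact Quotient.sound (hf _ _ hxy)

/-! ### The decomposition graph -/

abbrev Vt (t : STree Γ) : Type := {p : List Bool // p ≠ [] ∧ (pos? t p).isSome}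

instance (t : STree Γ) : DecidableEq (Vt t) := by unfold Vt; infer_instance

instance (t : STree Γ) : Fintype (Vt t) :=
  Fintype.subtype (((posList t).toFinset).erase []) (by
    intro p
    simp only [Finset.mem_erase, List.mem_toFinset, mem_posList])

def Gt (t : STree Γ) : SimpleGraph (Vt t) where
  Adj p q :=
    q.1 = false :: p.1 ∨ q.1 = true :: p.1 ∨ p.1 = false :: q.1 ∨ p.1 = true :: q.1 ∨
    (p.1 = [false] ∧ q.1 = [true]) ∨ (p.1 = [true] ∧ q.1 = [false])
  symm := ⟨by intro p q h; tauto⟩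
  loopless := by
    refine ⟨fun p h => ?_⟩
    rcases h with h | h | h | h | ⟨h1, h2⟩ | ⟨h1, h2⟩ <;>
      first
        | (have := congrArg List.length h; simp at this)
        | (rw [h1] at h2; simp at h2)

instance (t : STree Γ) : DecidableRel (Gt t).Adj := fun p q => by
  show Decidable (_ ∨ _)
  infer_instance

lemma gt_adj {t : STree Γ} (p q : Vt t) : (Gt t).Adj p q ↔
    (q.1 = false :: p.1 ∨ q.1 = true :: p.1 ∨ p.1 = false :: q.1 ∨ p.1 = true :: q.1 ∨
    (p.1 = [false] ∧ q.1 = [true]) ∨ (p.1 = [true] ∧ q.1 = [false])) := Iff.rfl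

lemma valid_tail {t : STree Γ} {b : Bool} {q : List Bool} (h : (pos? t (b :: q)).isSome) :
    (pos? t q).isSome := by
  rw [Option.isSome_iff_exists] at h
  obtain ⟨⟨s, k⟩, hx⟩ := h
  obtain ⟨a, l, r, k', hp, -⟩ := pos?_cons hx
  simp [hp]

lemma valid_child {t : STree Γ} {q : List Bool} {a : Γ} {l r : STree Γ} {k : ℕ}
    (h : pos? t q = some (.node a l r, k)) (b : Bool) : (pos? t (b :: q)).isSome := by
  rw [pos?_cons_node h]
  rfl

lemma no_child_of_leaf {t : STree Γ} {q : List Bool} {γ : Γ} {k : ℕ}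
    (h : pos? t q = some (.leaf γ, k)) (b : Bool) : pos? t (b :: q) = none := by
  simp [pos?, h, step]

lemma ne_of_len {t : STree Γ} {x y : Vt t} (h : x.1.length ≠ y.1.length) : x ≠ y :=
  fun he => h (by rw [he])

lemma vne_of_len {t : STree Γ} {x y : Vt t} (h : x.1.length ≠ y.1.length) : x ≠ y :=
  fun he => h (by rw [he])

lemma degree_leaf {t : STree Γ} (ht : ∀ b : Bool, (pos? t [b]).isSome)
    {p : Vt t} {γ : Γ} {k : ℕ} (hp : pos? t p.1 = some (.leaf γ, k)) :
    (Gt t).degree p = 1 := by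
  obtain ⟨pl, hpl⟩ := p
  rcases pl with _ | ⟨b, q⟩
  · exact absurd rfl hpl.1
  rcases q with _ | ⟨z, q'⟩
  · -- p = [b] ; unique neighbour is [!b]
    have hy : ((!b : Bool) :: [] : List Bool) ≠ [] ∧ (pos? t [!b]).isSome := ⟨by simp, ht (!b)⟩
    have hnb : (Gt t).neighborFinset ⟨[b], hpl⟩ = {⟨[!b], hy⟩} := by
      ext w
      rw [SimpleGraph.mem_neighborFinset, Finset.mem_singleton, gt_adj]
      constructor
      · rintro (h | h | h | h | ⟨h1, h2⟩ | ⟨h1, h2⟩)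
        · exact absurd w.2.2 (by rw [h, no_child_of_leaf hp]; simp)
        · exact absurd w.2.2 (by rw [h, no_child_of_leaf hp]; simp)
        · simp only [List.cons.injEq] at h
          exact absurd h.2.symm w.2.1
        · simp only [List.cons.injEq] at h
          exact absurd h.2.symm w.2.1
        · simp only [List.cons.injEq, and_true] at h1
          subst h1
          exact Subtype.ext h2
        · simp only [List.cons.injEq, and_true] at h1
          subst h1
          exact Subtype.ext h2
      · rintro rfl
        cases b
        · exact Or.inr (Or.inr (Or.inr (Or.inr (Or.inl ⟨rfl, rfl⟩))))
        · exact Or.inr (Or.inr (Or.inr (Or.inr (Or.inr ⟨rfl, rfl⟩))))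
    rw [SimpleGraph.degree, hnb, Finset.card_singleton]
  · -- p = b :: z :: q' ; unique neighbour is the parent
    have hq : (z :: q' : List Bool) ≠ [] ∧ (pos? t (z :: q')).isSome :=
      ⟨by simp, valid_tail hpl.2⟩
    have hnb : (Gt t).neighborFinset ⟨b :: z :: q', hpl⟩ = {⟨z :: q', hq⟩} := by
      ext w
      rw [SimpleGraph.mem_neighborFinset, Finset.mem_singleton, gt_adj]
      constructor
      · rintro (h | h | h | h | ⟨h1, h2⟩ | ⟨h1, h2⟩)
        · exact absurd w.2.2 (by rw [h, no_child_of_leaf hp]; simp)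
        · exact absurd w.2.2 (by rw [h, no_child_of_leaf hp]; simp)
        · simp only [List.cons.injEq] at h
          exact Subtype.ext h.2.symm
        · simp only [List.cons.injEq] at h
          exact Subtype.ext h.2.symm
        · simp at h1
        · simp at h1
      · rintro rfl
        cases b
        · exact Or.inr (Or.inr (Or.inl rfl))
        · exact Or.inr (Or.inr (Or.inr (Or.inl rfl)))
    rw [SimpleGraph.degree, hnb, Finset.card_singleton]

lemma degree_node {t : STree Γ} (ht : ∀ b : Bool, (pos? t [b]).isSome)
    {p : Vt t} {a : Γ} {l r : STree Γ} {k : ℕ} (hp : pos? t p.1 = some (.node a l r, k)) :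
    (Gt t).degree p = 3 := by
  obtain ⟨pl, hpl⟩ := p
  have hcf : (false :: pl : List Bool) ≠ [] ∧ (pos? t (false :: pl)).isSome :=
    ⟨by simp, valid_child hp false⟩
  have hct : (true :: pl : List Bool) ≠ [] ∧ (pos? t (true :: pl)).isSome :=
    ⟨by simp, valid_child hp true⟩
  rcases pl with _ | ⟨b, q⟩
  · exact absurd rfl hpl.1
  rcases q with _ | ⟨z, q'⟩
  · -- p = [b] : children plus the other root
    have hy : ((!b : Bool) :: [] : List Bool) ≠ [] ∧ (pos? t [!b]).isSome := ⟨by simp, ht (!b)⟩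
    have hnb : (Gt t).neighborFinset ⟨[b], hpl⟩ =
        {⟨false :: [b], hcf⟩, ⟨true :: [b], hct⟩, ⟨[!b], hy⟩} := by
      ext w
      rw [SimpleGraph.mem_neighborFinset, gt_adj]
      simp only [Finset.mem_insert, Finset.mem_singleton]
      constructor
      · rintro (h | h | h | h | ⟨h1, h2⟩ | ⟨h1, h2⟩)
        · exact Or.inl (Subtype.ext h)
        · exact Or.inr (Or.inl (Subtype.ext h))
        · simp only [List.cons.injEq] at h
          exact absurd h.2.symm w.2.1
        · simp only [List.cons.injEq] at h
          exact absurd h.2.symm w.2.1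
        · simp only [List.cons.injEq, and_true] at h1
          subst h1
          exact Or.inr (Or.inr (Subtype.ext h2))
        · simp only [List.cons.injEq, and_true] at h1
          subst h1
          exact Or.inr (Or.inr (Subtype.ext h2))
      · rintro (rfl | rfl | rfl)
        · exact Or.inl rfl
        · exact Or.inr (Or.inl rfl)
        · cases b
          · exact Or.inr (Or.inr (Or.inr (Or.inr (Or.inl ⟨rfl, rfl⟩))))
          · exact Or.inr (Or.inr (Or.inr (Or.inr (Or.inr ⟨rfl, rfl⟩))))
    rw [SimpleGraph.degree, hnb]
    rw [Finset.card_insert_of_notMem, Finset.card_insert_of_notMem, Finset.card_singleton]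
    · exact fun h => absurd (congrArg Subtype.val (Finset.mem_singleton.1 h)) (by
        intro h2
        have h3 := congrArg List.length h2
        simp at h3 <;> omega)
    · intro h
      rcases Finset.mem_insert.1 h with h | h
      · have h2 := congrArg Subtype.val h
        simp at h2
      · have h2 := congrArg Subtype.val (Finset.mem_singleton.1 h)
        have h3 := congrArg List.length h2
        simp at h3 <;> omega
  · -- p = b :: z :: q' : children plus parent
    have hq : (z :: q' : List Bool) ≠ [] ∧ (pos? t (z :: q')).isSome :=
      ⟨by simp, valid_tail hpl.2⟩
    have hnb : (Gt t).neighborFinset ⟨b :: z :: q', hpl⟩ =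
        {⟨false :: b :: z :: q', hcf⟩, ⟨true :: b :: z :: q', hct⟩, ⟨z :: q', hq⟩} := by
      ext w
      rw [SimpleGraph.mem_neighborFinset, gt_adj]
      simp only [Finset.mem_insert, Finset.mem_singleton]
      constructor
      · rintro (h | h | h | h | ⟨h1, h2⟩ | ⟨h1, h2⟩)
        · exact Or.inl (Subtype.ext h)
        · exact Or.inr (Or.inl (Subtype.ext h))
        · simp only [List.cons.injEq] at h
          exact Or.inr (Or.inr (Subtype.ext h.2.symm))
        · simp only [List.cons.injEq] at h
          exact Or.inr (Or.inr (Subtype.ext h.2.symm))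
        · simp at h1
        · simp at h1
      · rintro (rfl | rfl | rfl)
        · exact Or.inl rfl
        · exact Or.inr (Or.inl rfl)
        · cases b
          · exact Or.inr (Or.inr (Or.inl rfl))
          · exact Or.inr (Or.inr (Or.inr (Or.inl rfl)))
    rw [SimpleGraph.degree, hnb]
    rw [Finset.card_insert_of_notMem, Finset.card_insert_of_notMem, Finset.card_singleton]
    · intro h
      have h2 := congrArg Subtype.val (Finset.mem_singleton.1 h)
      have h3 := congrArg List.length h2
      simp at h3 <;> omega
    · intro h
      rcases Finset.mem_insert.1 h with h | h
      · have h2 := congrArg Subtype.val h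
        simp at h2
      · have h2 := congrArg Subtype.val (Finset.mem_singleton.1 h)
        have h3 := congrArg List.length h2
        simp at h3 <;> omega

lemma reach_base {t : STree Γ} (hf : (([false] : List Bool)) ≠ [] ∧ (pos? t [false]).isSome) :
    ∀ (l : List Bool) (h : l ≠ [] ∧ (pos? t l).isSome),
      (Gt t).Reachable ⟨l, h⟩ ⟨[false], hf⟩ := by
  intro l
  induction l with
  | nil => intro h; exact absurd rfl h.1
  | cons b q ih =>
    intro h
    rcases q with _ | ⟨z, q'⟩
    · cases b
      · exact SimpleGraph.Reachable.refl _
      · exact SimpleGraph.Adj.reachable (by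
          rw [gt_adj]
          exact Or.inr (Or.inr (Or.inr (Or.inr (Or.inr ⟨rfl, rfl⟩)))))
    · have hq : (z :: q' : List Bool) ≠ [] ∧ (pos? t (z :: q')).isSome :=
        ⟨by simp, valid_tail h.2⟩
      refine SimpleGraph.Reachable.trans (SimpleGraph.Adj.reachable ?_) (ih hq)
      rw [gt_adj]
      cases b
      · exact Or.inr (Or.inr (Or.inl rfl))
      · exact Or.inr (Or.inr (Or.inr (Or.inl rfl)))

lemma gt_connected {t : STree Γ} (hf : (([false] : List Bool)) ≠ [] ∧ (pos? t [false]).isSome) :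
    (Gt t).Connected := by
  rw [SimpleGraph.connected_iff]
  refine ⟨fun x y => ?_, ⟨⟨[false], hf⟩⟩⟩
  obtain ⟨xl, hx⟩ := x
  obtain ⟨yl, hy⟩ := y
  exact (reach_base hf xl hx).trans (reach_base hf yl hy).symm

/-- Edges with both endpoints in the descendant set of `c` are not the edge `s(c, par)`. -/
lemma within_ne {t : STree Γ} {c par : Vt t} (hpar : ¬c.1 <:+ par.1) {x y : Vt t}
    (hx : c.1 <:+ x.1) (hy : c.1 <:+ y.1) : s(x, y) ≠ s(c, par) := by
  intro h
  rw [Sym2.eq_iff] at h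
  rcases h with ⟨rfl, rfl⟩ | ⟨rfl, rfl⟩
  · exact hpar hy
  · exact hpar hx

/-- Edges with both endpoints outside the descendant set of `c` are not the edge `s(c, par)`. -/
lemma outside_ne {t : STree Γ} {c par : Vt t} {x y : Vt t}
    (hx : ¬c.1 <:+ x.1) (hy : ¬c.1 <:+ y.1) : s(x, y) ≠ s(c, par) := by
  intro h
  rw [Sym2.eq_iff] at h
  rcases h with ⟨rfl, rfl⟩ | ⟨rfl, rfl⟩
  · exact hx (List.suffix_refl _)
  · exact hy (List.suffix_refl _)

lemma reach_desc {t : STree Γ} (c : Vt t) (e : Sym2 (Vt t))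
    (he : ∀ x y : Vt t, c.1 <:+ x.1 → c.1 <:+ y.1 → s(x, y) ≠ e) :
    ∀ (q : Vt t), c.1 <:+ q.1 → ((Gt t).deleteEdges {e}).Reachable q c := by
  intro q hq
  obtain ⟨rr, hr⟩ := hq
  induction rr generalizing q with
  | nil =>
    have : q = c := Subtype.ext (by simpa using hr.symm)
    subst this
    exact SimpleGraph.Reachable.refl _
  | cons b rr ih =>
    have hq' : (rr ++ c.1 : List Bool) ≠ [] ∧ (pos? t (rr ++ c.1)).isSome := by
      constructor
      · simp [c.2.1]
      · apply valid_tail (b := b)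
        rw [show (b :: (rr ++ c.1) : List Bool) = q.1 by rw [← hr]; rfl]
        exact q.2.2
    set q' : Vt t := ⟨rr ++ c.1, hq'⟩ with hq'def
    have hadj : (Gt t).Adj q q' := by
      rw [gt_adj]
      cases b
      · exact Or.inr (Or.inr (Or.inl (by rw [← hr]; rfl)))
      · exact Or.inr (Or.inr (Or.inr (Or.inl (by rw [← hr]; rfl))))
    have hsfq : c.1 <:+ q.1 := ⟨b :: rr, hr⟩
    have hsfq' : c.1 <:+ q'.1 := ⟨rr, rfl⟩
    refine SimpleGraph.Reachable.trans (SimpleGraph.Adj.reachable ?_) (ih q' rfl)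
    rw [SimpleGraph.deleteEdges_adj]
    exact ⟨hadj, by simpa using he q q' hsfq hsfq'⟩

lemma getLastD_ne_nil {q : List Bool} (hq : q ≠ []) (b b' : Bool) :
    q.getLastD b = q.getLastD b' := by
  cases q with
  | nil => exact absurd rfl hq
  | cons z zs => rfl

lemma reach_out {t : STree Γ} (ht : ∀ b : Bool, (pos? t [b]).isSome)
    (c : Vt t) (e : Sym2 (Vt t))
    (he : ∀ x y : Vt t, ¬c.1 <:+ x.1 → ¬c.1 <:+ y.1 → s(x, y) ≠ e) :
    ∀ (l : List Bool) (h : l ≠ [] ∧ (pos? t l).isSome), ¬c.1 <:+ l →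
      ∃ rb : Bool, ((Gt t).deleteEdges {e}).Reachable ⟨l, h⟩ ⟨[rb], by simp, ht rb⟩ := by
  intro l
  induction l with
  | nil => exact fun h => absurd rfl h.1
  | cons b q ih =>
    intro h hnd
    by_cases hqne : q = []
    · subst hqne
      exact ⟨b, SimpleGraph.Reachable.refl _⟩
    have hq : q ≠ [] ∧ (pos? t q).isSome := ⟨hqne, valid_tail h.2⟩
    have hnd' : ¬c.1 <:+ q := fun hs => hnd (hs.trans (List.suffix_cons b q))
    have hadj : (Gt t).Adj ⟨b :: q, h⟩ ⟨q, hq⟩ := by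
      rw [gt_adj]
      cases b
      · exact Or.inr (Or.inr (Or.inl rfl))
      · exact Or.inr (Or.inr (Or.inr (Or.inl rfl)))
    have hstep : ((Gt t).deleteEdges {e}).Adj ⟨b :: q, h⟩ ⟨q, hq⟩ := by
      rw [SimpleGraph.deleteEdges_adj]
      exact ⟨hadj, by simpa using he _ _ hnd hnd'⟩
    obtain ⟨rb, hreach⟩ := ih hq hnd'
    exact ⟨rb, (hstep.reachable).trans hreach⟩

lemma sep {t : STree Γ} (c : Vt t) (e : Sym2 (Vt t))
    (hcross : ∀ x y : Vt t, (Gt t).Adj x y → c.1 <:+ x.1 → ¬c.1 <:+ y.1 → s(x, y) = e)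
    {q q' : Vt t} (hq : c.1 <:+ q.1) (hq' : ¬c.1 <:+ q'.1) :
    ¬((Gt t).deleteEdges {e}).Reachable q q' := by
  intro h
  obtain ⟨w⟩ := h
  obtain ⟨d, -, h1, h2⟩ := w.exists_boundary_dart {z : Vt t | c.1 <:+ z.1} hq hq'
  have hadj := d.adj
  rw [SimpleGraph.deleteEdges_adj] at hadj
  exact hadj.2 (by simpa using hcross _ _ hadj.1 h1 h2)

lemma suffix_singleton {l : List Bool} {b : Bool} (hne : l ≠ []) (h : l <:+ [b]) :
    l = [b] := by
  obtain ⟨rr, hrr⟩ := h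
  cases rr with
  | nil => simpa using hrr
  | cons z zs =>
    simp only [List.cons_append, List.cons.injEq] at hrr
    exact absurd (List.append_eq_nil_iff.1 hrr.2).2 hne

def parentOf {t : STree Γ} (par c : Vt t) : Prop :=
  c.1 = false :: par.1 ∨ c.1 = true :: par.1 ∨
  (c.1 = [false] ∧ par.1 = [true]) ∨ (c.1 = [true] ∧ par.1 = [false])

lemma adj_iff_parentOf {t : STree Γ} (p q : Vt t) :
    (Gt t).Adj p q ↔ parentOf p q ∨ parentOf q p := by
  rw [gt_adj]
  unfold parentOf
  tauto

lemma parentOf_not_suffix {t : STree Γ} {par c : Vt t} (h : parentOf par c) :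
    ¬c.1 <:+ par.1 := by
  rcases h with h | h | ⟨h1, h2⟩ | ⟨h1, h2⟩
  · intro hs
    have := hs.length_le
    rw [h] at this
    simp at this
  · intro hs
    have := hs.length_le
    rw [h] at this
    simp at this
  · intro hs
    rw [h1, h2] at hs
    have := suffix_singleton (by simp) hs
    simp at this
  · intro hs
    rw [h1, h2] at hs
    have := suffix_singleton (by simp) hs
    simp at this

lemma crossing_eq {t : STree Γ} {c par : Vt t} (hpo : parentOf par c) :
    ∀ x y : Vt t, (Gt t).Adj x y → c.1 <:+ x.1 → ¬c.1 <:+ y.1 → s(x, y) = s(c, par) := by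
  intro x y hadj hx hy
  rw [gt_adj] at hadj
  have hchild : ∀ b : Bool, x.1 = b :: y.1 → s(x, y) = s(c, par) := by
    intro b h
    obtain ⟨rr, hrr⟩ := hx
    cases rr with
    | nil =>
      simp only [List.nil_append] at hrr
      rw [← hrr] at h
      have hxc : x = c := Subtype.ext hrr.symm
      rcases hpo with hp | hp | ⟨hp1, hp2⟩ | ⟨hp1, hp2⟩
      · rw [hp] at h
        simp only [List.cons.injEq] at h
        have hyp : y = par := Subtype.ext h.2.symm
        rw [hxc, hyp]
      · rw [hp] at h
        simp only [List.cons.injEq] at h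
        have hyp : y = par := Subtype.ext h.2.symm
        rw [hxc, hyp]
      · rw [hp1] at h
        simp only [List.cons.injEq] at h
        exact absurd h.2.symm y.2.1
      · rw [hp1] at h
        simp only [List.cons.injEq] at h
        exact absurd h.2.symm y.2.1
    | cons b2 rr2 =>
      rw [List.cons_append] at hrr
      rw [← hrr] at h
      simp only [List.cons.injEq] at h
      exact absurd ⟨rr2, h.2⟩ hy
  have hcross2 : ∀ cb : Bool, x.1 = [cb] → y.1 = [!cb] → s(x, y) = s(c, par) := by
    intro cb hx1 hy1
    have hc1 : c.1 = [cb] := by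
      rw [hx1] at hx
      exact suffix_singleton c.2.1 hx
    have hxc : x = c := Subtype.ext (by rw [hx1, hc1])
    rcases hpo with hp | hp | ⟨hp1, hp2⟩ | ⟨hp1, hp2⟩
    · rw [hc1] at hp
      simp only [List.cons.injEq] at hp
      exact absurd hp.2.symm par.2.1
    · rw [hc1] at hp
      simp only [List.cons.injEq] at hp
      exact absurd hp.2.symm par.2.1
    · rw [hp1] at hc1
      simp only [List.cons.injEq, and_true] at hc1
      subst hc1
      have hyp : y = par := Subtype.ext (by rw [hy1, hp2]; rfl)
      rw [hxc, hyp]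
    · rw [hp1] at hc1
      simp only [List.cons.injEq, and_true] at hc1
      subst hc1
      have hyp : y = par := Subtype.ext (by rw [hy1, hp2]; rfl)
      rw [hxc, hyp]
  rcases hadj with h | h | h | h | ⟨h1, h2⟩ | ⟨h1, h2⟩
  · refine absurd ?_ hy
    rw [h]
    exact hx.trans (List.suffix_cons false x.1)
  · refine absurd ?_ hy
    rw [h]
    exact hx.trans (List.suffix_cons true x.1)
  · exact hchild false h
  · exact hchild true h
  · exact hcross2 false h1 (by rw [h2]; rfl)
  · exact hcross2 true h1 (by rw [h2]; rfl)

lemma root_link {t : STree Γ} (ht : ∀ b : Bool, (pos? t [b]).isSome) (e : Sym2 (Vt t))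
    (hne : ∀ x y : Vt t, x.1 = [false] → y.1 = [true] → s(x, y) ≠ e) (x y : Bool) :
    ((Gt t).deleteEdges {e}).Reachable
      ⟨[x], by simp, ht x⟩ ⟨[y], by simp, ht y⟩ := by
  cases x <;> cases y
  · exact SimpleGraph.Reachable.refl _
  · refine SimpleGraph.Adj.reachable ?_
    rw [SimpleGraph.deleteEdges_adj]
    exact ⟨by rw [gt_adj]; exact Or.inr (Or.inr (Or.inr (Or.inr (Or.inl ⟨rfl, rfl⟩)))),
      by simpa using hne _ _ rfl rfl⟩
  · refine SimpleGraph.Adj.reachable ?_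
    rw [SimpleGraph.deleteEdges_adj]
    refine ⟨by rw [gt_adj]; exact Or.inr (Or.inr (Or.inr (Or.inr (Or.inr ⟨rfl, rfl⟩)))), ?_⟩
    have := hne ⟨[false], by simp, ht false⟩ ⟨[true], by simp, ht true⟩ rfl rfl
    simp only [Set.mem_singleton_iff]
    rw [Sym2.eq_swap]
    exact this
  · exact SimpleGraph.Reachable.refl _

lemma comp_char {t : STree Γ} (ht : ∀ b : Bool, (pos? t [b]).isSome)
    {c par : Vt t} (hpo : parentOf par c) (q : Vt t) :
    (((Gt t).deleteEdges {s(c, par)}).Reachable q c ↔ c.1 <:+ q.1) ∧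
    (((Gt t).deleteEdges {s(c, par)}).Reachable q par ↔ ¬c.1 <:+ q.1) := by
  have hpar := parentOf_not_suffix hpo
  have hwithin : ∀ x y : Vt t, c.1 <:+ x.1 → c.1 <:+ y.1 → s(x, y) ≠ s(c, par) :=
    fun x y hx hy => within_ne hpar hx hy
  have hout : ∀ x y : Vt t, ¬c.1 <:+ x.1 → ¬c.1 <:+ y.1 → s(x, y) ≠ s(c, par) :=
    fun x y hx hy => outside_ne hx hy
  constructor
  · constructor
    · intro h
      by_contra hnd
      exact sep c _ (crossing_eq hpo) (List.suffix_refl c.1) hnd h.symm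
    · exact reach_desc c _ hwithin q
  · constructor
    · intro h hdq
      exact sep c _ (crossing_eq hpo) hdq hpar h
    · intro hnd
      rcases hpo with hp | hp | ⟨hp1, hp2⟩ | ⟨hp1, hp2⟩
      -- two "deep child" cases: go to the roots and link them
      · obtain ⟨r1, hr1⟩ := reach_out ht c _ hout q.1 q.2 hnd
        obtain ⟨r2, hr2⟩ := reach_out ht c _ hout par.1 par.2 hpar
        have hlink := root_link ht (s(c, par)) (fun x y hx hy heq => by
          rw [Sym2.eq_iff] at heq
          rcases heq with ⟨rfl, rfl⟩ | ⟨rfl, rfl⟩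
          · rw [hp] at hx
            simp at hx <;> exact y.2.1 hx
          · rw [hp] at hy
            simp at hy <;> exact x.2.1 hy) r1 r2
        exact ((hr1.trans hlink).trans hr2.symm)
      · obtain ⟨r1, hr1⟩ := reach_out ht c _ hout q.1 q.2 hnd
        obtain ⟨r2, hr2⟩ := reach_out ht c _ hout par.1 par.2 hpar
        have hlink := root_link ht (s(c, par)) (fun x y hx hy heq => by
          rw [Sym2.eq_iff] at heq
          rcases heq with ⟨rfl, rfl⟩ | ⟨rfl, rfl⟩
          · rw [hp] at hx
            simp at hx <;> exact y.2.1 hx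
          · rw [hp] at hy
            simp at hy <;> exact x.2.1 hy) r1 r2
        exact ((hr1.trans hlink).trans hr2.symm)
      -- the two root-edge cases: outside the descendants of c means inside those of par
      · have hdesc : par.1 <:+ q.1 := by
          rcases List.eq_nil_or_concat q.1 with hq0 | ⟨rr, z, hq0⟩
          · exact absurd hq0 q.2.1
          · cases z
            · exact absurd (by rw [hq0, hp1, List.concat_eq_append]; exact ⟨rr, rfl⟩) hnd
            · rw [hq0, hp2, List.concat_eq_append]
              exact ⟨rr, rfl⟩
        refine reach_desc par _ (fun x y hx hy heq => ?_) q hdesc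
        have hps : ¬par.1 <:+ c.1 := by
          rw [hp1, hp2]
          intro hs
          have := suffix_singleton (by simp) hs
          simp at this
        apply within_ne hps hx hy
        rw [heq, Sym2.eq_swap]
      · have hdesc : par.1 <:+ q.1 := by
          rcases List.eq_nil_or_concat q.1 with hq0 | ⟨rr, z, hq0⟩
          · exact absurd hq0 q.2.1
          · cases z
            · rw [hq0, hp2, List.concat_eq_append]
              exact ⟨rr, rfl⟩
            · exact absurd (by rw [hq0, hp1, List.concat_eq_append]; exact ⟨rr, rfl⟩) hnd
        refine reach_desc par _ (fun x y hx hy heq => ?_) q hdesc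
        have hps : ¬par.1 <:+ c.1 := by
          rw [hp1, hp2]
          intro hs
          have := suffix_singleton (by simp) hs
          simp at this
        apply within_ne hps hx hy
        rw [heq, Sym2.eq_swap]

lemma gt_isTree {t : STree Γ} (ht : ∀ b : Bool, (pos? t [b]).isSome) :
    (Gt t).IsTree := by
  constructor
  · exact gt_connected ⟨by simp, ht false⟩
  · rw [SimpleGraph.isAcyclic_iff_forall_adj_isBridge]
    intro v w hadj
    rw [SimpleGraph.isBridge_iff]
    rcases (adj_iff_parentOf v w).1 hadj with hpo | hpo
    · -- w is the child
      intro h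
      have h' : ((Gt t).deleteEdges {s(v, w)}).Reachable v w := h
      rw [show s(v, w) = s(w, v) from Sym2.eq_swap] at h'
      exact sep w _ (crossing_eq hpo) (List.suffix_refl _) (parentOf_not_suffix hpo) h'.symm
    · -- v is the child
      intro h
      have h' : ((Gt t).deleteEdges {s(v, w)}).Reachable v w := h
      exact sep v _ (crossing_eq hpo) (List.suffix_refl _) (parentOf_not_suffix hpo) h'

/-! ### Runs over encoded trees -/

section Sys

variable {α Q : Type} (i : ℕ) (A : TreeAut (EncAlph Γ {i}) Q)
  (E : Finset α) (t : STree Γ) (φ : {a // a ∈ E} ≃ Fin t.leafCount)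

/-- The leaf-labelling function used by `enc` for a single set `Y`. -/
noncomputable def fenc (Y : Finset α) : ℕ → Γ → EncAlph Γ {i} :=
  fun k a => Sum.inr (a, fun _ => if h : k < t.leafCount then
    decide ((φ.symm ⟨k, h⟩ : {a // a ∈ E}).1 ∈ Y) else false)

lemma enc_eq (Y : Finset α) :
    enc E t φ {i} (fun _ => Y) = t.relabel (fenc i E t φ Y) Sum.inl 0 := rfl

lemma fenc_congr {Y Y' : Finset α} {m : ℕ}
    (h : ∀ hm : m < t.leafCount,
      ((φ.symm ⟨m, hm⟩ : {a // a ∈ E}).1 ∈ Y ↔ (φ.symm ⟨m, hm⟩ : {a // a ∈ E}).1 ∈ Y')) :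
    ∀ a : Γ, fenc i E t φ Y m a = fenc i E t φ Y' m a := by
  intro a
  unfold fenc
  have he : (fun _ : {j // j ∈ ({i} : Finset ℕ)} => if hm : m < t.leafCount then
        decide ((φ.symm ⟨m, hm⟩ : {a // a ∈ E}).1 ∈ Y) else false)
      = (fun _ : {j // j ∈ ({i} : Finset ℕ)} => if hm : m < t.leafCount then
        decide ((φ.symm ⟨m, hm⟩ : {a // a ∈ E}).1 ∈ Y') else false) := by
    funext j
    by_cases hm : m < t.leafCount
    · simp only [dif_pos hm, decide_eq_decide]
      exact h hm
    · simp [hm]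
  rw [he]

/-- The state set computed at a subtree `s` with offset `k`. -/
noncomputable def runP (Y : Finset α) (s : STree Γ) (k : ℕ) : Finset Q :=
  A.run (s.relabel (fenc i E t φ Y) Sum.inl k)

lemma runP_congr {Y Y' : Finset α} {s : STree Γ} {k : ℕ}
    (h : ∀ m, k ≤ m → m < k + s.leafCount → ∀ hm : m < t.leafCount,
      ((φ.symm ⟨m, hm⟩ : {a // a ∈ E}).1 ∈ Y ↔ (φ.symm ⟨m, hm⟩ : {a // a ∈ E}).1 ∈ Y')) :
    runP i A E t φ Y s k = runP i A E t φ Y' s k := by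
  unfold runP
  rw [relabel_congr _ _ _ s k (fun m a h1 h2 => fenc_congr i E t φ (h m h1 h2) a)]

lemma run_full_congr {Y Y' : Finset α} {p : List Bool} {s : STree Γ} {k : ℕ}
    (hpos : pos? t p = some (s, k))
    (hagree : ∀ m, (m < k ∨ k + s.leafCount ≤ m) → ∀ hm : m < t.leafCount,
      ((φ.symm ⟨m, hm⟩ : {a // a ∈ E}).1 ∈ Y ↔ (φ.symm ⟨m, hm⟩ : {a // a ∈ E}).1 ∈ Y'))
    (hrun : runP i A E t φ Y s k = runP i A E t φ Y' s k) :
    A.Accepts (enc E t φ {i} (fun _ => Y)) ↔ A.Accepts (enc E t φ {i} (fun _ => Y')) := by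
  have h0 : A.run (t.relabel (fenc i E t φ Y) Sum.inl 0)
      = A.run (t.relabel (fenc i E t φ Y') Sum.inl 0) :=
    run_at A _ _ _ t p s k hpos (fun m a hm => fenc_congr i E t φ (hagree m hm) a) hrun
  rw [enc_eq, enc_eq]
  unfold TreeAut.Accepts
  rw [h0]

lemma mem_ind_iff {Y : Finset α} (hYE : Y ⊆ E) :
    (Y ∈ (systemOf i A E t φ).Ind) ↔ A.Accepts (enc E t φ {i} (fun _ => Y)) := by
  simp [systemOf, hYE]

/-- The leaf index of an element. -/
noncomputable def idx (a : α) : ℕ :=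
  if h : a ∈ E then (φ ⟨a, h⟩ : Fin t.leafCount).1 else 0

lemma idx_lt {a : α} (h : a ∈ E) : idx E t φ a < t.leafCount := by
  rw [idx, dif_pos h]
  exact (φ ⟨a, h⟩).2

lemma idx_symm (m : ℕ) (hm : m < t.leafCount) :
    idx E t φ ((φ.symm ⟨m, hm⟩ : {a // a ∈ E}).1) = m := by
  have h2 := (φ.symm (⟨m, hm⟩ : Fin t.leafCount)).2
  rw [idx, dif_pos h2, Subtype.coe_eta, Equiv.apply_symm_apply]

lemma numClasses_sub [Fintype Q] {p : List Bool} {s : STree Γ} {k : ℕ}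
    (hpos : pos? t p = some (s, k)) (U : Finset α) (hUE : U ⊆ E)
    (hU : ∀ a ∈ E, (a ∈ U ↔ (k ≤ idx E t φ a ∧ idx E t φ a < k + s.leafCount))) :
    (systemOf i A E t φ).numClasses U ≤ Nat.card (Finset Q → Prop) := by
  unfold SetSystem.numClasses
  apply card_quot_le _ (fun X : {X : Finset α // X ⊆ U} =>
    (fun T : Finset Q => runP i A E t φ X.1 s k = T))
  intro X X' hf
  have hrunXX' : runP i A E t φ X.1 s k = runP i A E t φ X'.1 s k := by
    have h2 := congrFun hf (runP i A E t φ X.1 s k)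
    exact (Eq.mp h2 rfl).symm
  show (systemOf i A E t φ).Eqv U X.1 X'.1
  intro Z hZ
  have hZE : Z ⊆ E := fun a ha => (Finset.mem_sdiff.1 (hZ ha)).1
  have hZU : ∀ a ∈ Z, a ∉ U := fun a ha => (Finset.mem_sdiff.1 (hZ ha)).2
  have hXE : X.1 ⊆ E := X.2.trans hUE
  have hX'E : X'.1 ⊆ E := X'.2.trans hUE
  rw [mem_ind_iff i A E t φ (Finset.union_subset hXE hZE),
    mem_ind_iff i A E t φ (Finset.union_subset hX'E hZE)]
  have hZout : ∀ m, k ≤ m → m < k + s.leafCount → ∀ hm : m < t.leafCount,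
      (φ.symm ⟨m, hm⟩ : {a // a ∈ E}).1 ∉ Z := by
    intro m h1 h2 hm hin
    have ha := (φ.symm (⟨m, hm⟩ : Fin t.leafCount)).2
    have := (hU _ ha).2 (by rw [idx_symm]; exact ⟨h1, h2⟩)
    exact hZU _ hin this
  have hXout : ∀ (W : Finset α), W ⊆ U → ∀ m, (m < k ∨ k + s.leafCount ≤ m) →
      ∀ hm : m < t.leafCount, (φ.symm ⟨m, hm⟩ : {a // a ∈ E}).1 ∉ W := by
    intro W hW m hout hm hin
    have ha := (φ.symm (⟨m, hm⟩ : Fin t.leafCount)).2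
    have := (hU _ ha).1 (hW hin)
    rw [idx_symm] at this
    omega
  apply run_full_congr i A E t φ hpos
  · intro m hout hm
    simp only [Finset.mem_union]
    have h1 := hXout X.1 X.2 m hout hm
    have h2 := hXout X'.1 X'.2 m hout hm
    tauto
  · calc runP i A E t φ (X.1 ∪ Z) s k
        = runP i A E t φ X.1 s k := by
          apply runP_congr
          intro m h1 h2 hm
          simp only [Finset.mem_union]
          have := hZout m h1 h2 hm
          tauto
      _ = runP i A E t φ X'.1 s k := hrunXX'
      _ = runP i A E t φ (X'.1 ∪ Z) s k := by
          apply runP_congr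
          intro m h1 h2 hm
          simp only [Finset.mem_union]
          have := hZout m h1 h2 hm
          tauto

lemma numClasses_comp [Fintype Q] {p : List Bool} {s : STree Γ} {k : ℕ}
    (hpos : pos? t p = some (s, k)) (U : Finset α) (hUE : U ⊆ E)
    (hU : ∀ a ∈ E, (a ∈ U ↔ ¬(k ≤ idx E t φ a ∧ idx E t φ a < k + s.leafCount))) :
    (systemOf i A E t φ).numClasses U ≤ Nat.card (Finset Q → Prop) := by
  unfold SetSystem.numClasses
  apply card_quot_le _ (fun X : {X : Finset α // X ⊆ U} =>
    (fun T : Finset Q => ∃ Z : Finset α, Z ⊆ E ∧ (∀ a ∈ Z, a ∉ U) ∧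
      runP i A E t φ (X.1 ∪ Z) s k = T ∧ (X.1 ∪ Z) ∈ (systemOf i A E t φ).Ind))
  have hXin : ∀ (W : Finset α), W ⊆ U → ∀ m, k ≤ m → m < k + s.leafCount →
      ∀ hm : m < t.leafCount, (φ.symm ⟨m, hm⟩ : {a // a ∈ E}).1 ∉ W := by
    intro W hW m h1 h2 hm hin
    have ha := (φ.symm (⟨m, hm⟩ : Fin t.leafCount)).2
    have := (hU _ ha).1 (hW hin)
    rw [idx_symm] at this
    omega
  have hZin : ∀ (Z : Finset α), Z ⊆ E → (∀ a ∈ Z, a ∉ U) →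
      ∀ m, (m < k ∨ k + s.leafCount ≤ m) → ∀ hm : m < t.leafCount,
      (φ.symm ⟨m, hm⟩ : {a // a ∈ E}).1 ∉ Z := by
    intro Z hZE hZU m hout hm hin
    have ha := (φ.symm (⟨m, hm⟩ : Fin t.leafCount)).2
    have h2 := hZU _ hin
    have h3 := (hU _ ha)
    rw [idx_symm] at h3
    rw [h3] at h2
    simp only [not_not] at h2
    omega
  have main : ∀ X X' : {X : Finset α // X ⊆ U},
      ((fun T : Finset Q => ∃ Z : Finset α, Z ⊆ E ∧ (∀ a ∈ Z, a ∉ U) ∧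
        runP i A E t φ (X.1 ∪ Z) s k = T ∧ (X.1 ∪ Z) ∈ (systemOf i A E t φ).Ind)
      = (fun T : Finset Q => ∃ Z : Finset α, Z ⊆ E ∧ (∀ a ∈ Z, a ∉ U) ∧
        runP i A E t φ (X'.1 ∪ Z) s k = T ∧ (X'.1 ∪ Z) ∈ (systemOf i A E t φ).Ind)) →
      ∀ Z : Finset α, Z ⊆ (systemOf i A E t φ).E \ U →
        (X.1 ∪ Z) ∈ (systemOf i A E t φ).Ind → (X'.1 ∪ Z) ∈ (systemOf i A E t φ).Ind := by
    intro X X' hf Z hZ hmem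
    have hZE : Z ⊆ E := fun a ha => (Finset.mem_sdiff.1 (hZ ha)).1
    have hZU : ∀ a ∈ Z, a ∉ U := fun a ha => (Finset.mem_sdiff.1 (hZ ha)).2
    have hXE : X.1 ⊆ E := X.2.trans hUE
    have hX'E : X'.1 ⊆ E := X'.2.trans hUE
    have h2 := congrFun hf (runP i A E t φ (X.1 ∪ Z) s k)
    simp only [eq_iff_iff] at h2
    obtain ⟨Z', hZ'E, hZ'U, hT, hmem'⟩ := h2.1 ⟨Z, hZE, hZU, rfl, hmem⟩
    have hZ'E2 : X'.1 ∪ Z' ⊆ E := Finset.union_subset hX'E hZ'E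
    rw [mem_ind_iff i A E t φ hZ'E2] at hmem'
    rw [mem_ind_iff i A E t φ (Finset.union_subset hX'E hZE)]
    refine (run_full_congr i A E t φ hpos ?_ ?_).1 hmem'
    · -- outside the range, Z' and Z are invisible
      intro m hout hm
      simp only [Finset.mem_union]
      have h3 := hZin Z' hZ'E hZ'U m hout hm
      have h4 := hZin Z hZE hZU m hout hm
      tauto
    · -- inside the range, X and X' are invisible
      calc runP i A E t φ (X'.1 ∪ Z') s k
          = runP i A E t φ (X.1 ∪ Z) s k := hT
        _ = runP i A E t φ (X'.1 ∪ Z) s k := by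
            apply runP_congr
            intro m h1 h2 hm
            simp only [Finset.mem_union]
            have h3 := hXin X.1 X.2 m h1 h2 hm
            have h4 := hXin X'.1 X'.2 m h1 h2 hm
            tauto
  intro X X' hf
  show (systemOf i A E t φ).Eqv U X.1 X'.1
  intro Z hZ
  exact ⟨main X X' hf Z hZ, main X' X hf.symm Z hZ⟩

end Sys

lemma numClasses_le_pow {α : Type} (S : SetSystem α) (U : Finset α) :
    S.numClasses U ≤ 2 ^ U.card := by
  unfold SetSystem.numClasses
  have h1 : Nat.card (Quotient (S.eqvSetoid U)) ≤
      Nat.card {X : Finset α // X ∈ U.powerset} := by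
    apply card_quot_le _ (fun X : {X : Finset α // X ⊆ U} =>
      (⟨X.1, Finset.mem_powerset.2 X.2⟩ : {X : Finset α // X ∈ U.powerset}))
    intro X X' h
    have h2 : X = X' := Subtype.ext
      (congrArg (fun y : {X : Finset α // X ∈ U.powerset} => y.1) h)
    rw [h2]
  calc Nat.card (Quotient (S.eqvSetoid U)) ≤ Nat.card {X : Finset α // X ∈ U.powerset} := h1
    _ = 2 ^ U.card := by rw [Nat.card_eq_fintype_card, Fintype.card_coe, Finset.card_powerset]

lemma key {α Γ Q : Type} [Fintype Q] (i : ℕ) (A : TreeAut (EncAlph Γ {i}) Q)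
    (E : Finset α) (t : STree Γ) (φ : {a // a ∈ E} ≃ Fin t.leafCount) :
    (systemOf i A E t φ).dw ≤ max 2 (Nat.card (Finset Q → Prop)) := by
  cases t with
  | leaf γ =>
    rcases isEmpty_or_nonempty (Decomp α E) with he | hne
    · have hempty : {k : ℕ | ∃ D : Decomp α (systemOf i A E (.leaf γ) φ).E,
          ∀ U : Finset α, D.Displays U → (systemOf i A E (.leaf γ) φ).numClasses U ≤ k} = ∅ :=
        Set.eq_empty_iff_forall_notMem.2 (fun k hk => he.false hk.choose)
      rw [SetSystem.dw, hempty, Nat.sInf_empty]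
      exact Nat.zero_le _
    · obtain ⟨D⟩ := hne
      apply Nat.sInf_le
      refine ⟨D, fun U hU => ?_⟩
      have hE1 : E.card = 1 := by
        have h2 := Fintype.card_congr φ
        rw [Fintype.card_coe, Fintype.card_fin] at h2
        simpa [STree.leafCount] using h2
      have hUcard : U.card ≤ 1 := hE1 ▸ Finset.card_le_card hU.1
      calc (systemOf i A E (.leaf γ) φ).numClasses U ≤ 2 ^ U.card := numClasses_le_pow _ _
        _ ≤ 2 ^ 1 := Nat.pow_le_pow_right (by norm_num) hUcard
        _ ≤ max 2 (Nat.card (Finset Q → Prop)) := by simp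
  | node a0 l0 r0 =>
    have ht : ∀ b : Bool, (pos? (STree.node a0 l0 r0) [b]).isSome := by
      intro b
      cases b
      · rw [pos?_false]; rfl
      · rw [pos?_true]; rfl
    have hlp_ne : ∀ m : ℕ, leafPos (STree.node a0 l0 r0) m ≠ [] := by
      intro m
      rw [leafPos]
      split <;> simp
    have hlp_valid : ∀ m : ℕ, m < (STree.node a0 l0 r0).leafCount →
        (pos? (STree.node a0 l0 r0) (leafPos (STree.node a0 l0 r0) m)).isSome := by
      intro m hm
      obtain ⟨γ, hγ⟩ := pos?_leafPos _ m hm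
      simp [hγ]
    have hsuffix : ∀ (c : Vt (STree.node a0 l0 r0)) (s : STree Γ) (k : ℕ),
        pos? (STree.node a0 l0 r0) c.1 = some (s, k) → ∀ a, a ∈ E →
        (c.1 <:+ leafPos (STree.node a0 l0 r0) (idx E (STree.node a0 l0 r0) φ a) ↔
          (k ≤ idx E (STree.node a0 l0 r0) φ a ∧
            idx E (STree.node a0 l0 r0) φ a < k + s.leafCount)) := by
      intro c s k hsk a ha
      obtain ⟨γ, hγ⟩ := pos?_leafPos _ _ (idx_lt E (STree.node a0 l0 r0) φ ha)
      constructor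
      · intro hsf
        exact suffix_range hγ hsk hsf
      · intro hr
        rcases pos?_trichotomy _ _ _ _ _ _ _ hγ hsk with h | h | h
        · exact h
        · omega
        · omega
    have hex : ∀ x : α, ∃ v : Vt (STree.node a0 l0 r0),
        x ∈ E → v.1 = leafPos (STree.node a0 l0 r0) (idx E (STree.node a0 l0 r0) φ x) := by
      intro x
      by_cases h : x ∈ E
      · exact ⟨⟨leafPos (STree.node a0 l0 r0) (idx E (STree.node a0 l0 r0) φ x),
          hlp_ne _, hlp_valid _ (idx_lt E (STree.node a0 l0 r0) φ h)⟩, fun _ => rfl⟩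
      · exact ⟨⟨[false], by simp, ht false⟩, fun hx => absurd hx h⟩
    choose leaffun hleaffun using hex
    set D : Decomp α E :=
      { V := Vt (STree.node a0 l0 r0)
        G := Gt (STree.node a0 l0 r0)
        isTree := gt_isTree ht
        subcubic := by
          intro v
          obtain ⟨⟨s, k⟩, hsk⟩ := Option.isSome_iff_exists.1 v.2.2
          cases s with
          | leaf γ => exact Or.inl (degree_leaf ht hsk)
          | node b l r => exact Or.inr (degree_node ht hsk)
        leaf := leaffun
        leaf_degree := by
          intro a ha
          obtain ⟨γ, hγ⟩ := pos?_leafPos _ _ (idx_lt E (STree.node a0 l0 r0) φ ha)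
          refine degree_leaf ht (γ := γ) (k := idx E (STree.node a0 l0 r0) φ a) ?_
          rw [hleaffun a ha]
          exact hγ
        leaf_injOn := by
          intro x hx y hy hxy
          simp only [Finset.mem_coe] at hx hy
          have h2 := congrArg Subtype.val hxy
          rw [hleaffun x hx, hleaffun y hy] at h2
          obtain ⟨γ1, hγ1⟩ := pos?_leafPos _ _ (idx_lt E (STree.node a0 l0 r0) φ hx)
          obtain ⟨γ2, hγ2⟩ := pos?_leafPos _ _ (idx_lt E (STree.node a0 l0 r0) φ hy)
          rw [h2, hγ2] at hγ1
          simp only [Option.some.injEq, Prod.mk.injEq] at hγ1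
          have hidx : idx E (STree.node a0 l0 r0) φ x = idx E (STree.node a0 l0 r0) φ y :=
            hγ1.2.symm
          rw [idx, dif_pos hx, idx, dif_pos hy] at hidx
          have h3 : φ ⟨x, hx⟩ = φ ⟨y, hy⟩ := Fin.ext hidx
          have h4 := φ.injective h3
          exact congrArg Subtype.val h4
        leaf_surj := by
          intro v hv
          obtain ⟨⟨s, k⟩, hsk⟩ := Option.isSome_iff_exists.1 v.2.2
          cases s with
          | node b l r =>
            rw [degree_node ht hsk] at hv
            omega
          | leaf γ =>
            obtain ⟨hk, hlp⟩ := leafPos_pos? _ _ _ _ hsk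
            refine ⟨(φ.symm ⟨k, hk⟩ : {a // a ∈ E}).1, (φ.symm ⟨k, hk⟩).2, ?_⟩
            apply Subtype.ext
            rw [hleaffun _ (φ.symm ⟨k, hk⟩).2, idx_symm, hlp] } with hD
    apply Nat.sInf_le
    refine ⟨D, fun U hU => ?_⟩
    obtain ⟨hUE, u, v, huv, hiff⟩ := hU
    have hleafval : ∀ a, a ∈ E → (D.leaf a) = leaffun a := by
      intro a ha
      rfl
    rcases (adj_iff_parentOf u v).1 huv with hpo | hpo
    · -- v is the child, u the parent side: complement of a subtree
      obtain ⟨⟨s, k⟩, hsk⟩ := Option.isSome_iff_exists.1 v.2.2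
      refine le_trans (numClasses_comp i A E (STree.node a0 l0 r0) φ hsk U hUE ?_)
        (le_max_right _ _)
      intro a ha
      rw [hiff a ha]
      rw [show s(u, v) = s(v, u) from Sym2.eq_swap]
      rw [hleafval a ha]
      rw [(comp_char ht hpo (leaffun a)).2]
      rw [hleaffun a ha]
      exact not_congr (hsuffix v s k hsk a ha)
    · -- u is the child: a subtree
      obtain ⟨⟨s, k⟩, hsk⟩ := Option.isSome_iff_exists.1 u.2.2
      refine le_trans (numClasses_sub i A E (STree.node a0 l0 r0) φ hsk U hUE ?_)
        (le_max_right _ _)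
      intro a ha
      rw [hiff a ha]
      rw [hleafval a ha]
      rw [(comp_char ht hpo (leaffun a)).1]
      rw [hleaffun a ha]
      exact hsuffix u s k hsk a ha

end Aux


/-- Lemma `redcap`: an automatic class of set-systems has bounded
decomposition-width. -/
theorem statement_10 {α : Type} (𝓜 : Set (SetSystem α)) (h : Automatic 𝓜) :
    ∃ K : ℕ, ∀ S ∈ 𝓜, S.dw ≤ K := by
  obtain ⟨Γ, hΓ, Q, hQ, i, A, hIary, hrec⟩ := h
  refine ⟨max 2 (Nat.card (Finset Q → Prop)), fun S hS => ?_⟩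
  obtain ⟨t, φ, hSeq⟩ := hrec S hS
  have h1 : S.dw = (systemOf i A S.E t φ).dw := congrArg SetSystem.dw hSeq
  rw [h1]
  exact Aux.key i A S.E t φ
end

section
/- Every finite matroid M of rank two satisfies dw(M) ≤ 5. Consequently, the class of rank-two matroids is pigeonhole. -/
open scoped Classical

/-! ### Auxiliary material for Statement 18 -/

section Generic

lemma reachable_const {V : Type*} {G : SimpleGraph V} {h : V → Bool}
    (H : ∀ a b, G.Adj a b → h a = h b) {u v : V} (r : G.Reachable u v) : h u = h v := by
  obtain ⟨w⟩ := r
  induction w with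
  | nil => rfl
  | cons ha _ ih => exact (H _ _ ha).trans ih

lemma reachable_eq_of_isolated {V : Type*} {G : SimpleGraph V} {u : V}
    (hiso : ∀ b, ¬ G.Adj u b) {w : V} (r : G.Reachable w u) : w = u := by
  obtain ⟨p⟩ := r.symm
  cases p with
  | nil => rfl
  | cons ha _ => exact absurd ha (hiso _)

end Generic

section MatroidRank2

variable {α : Type} [Fintype α] {M : Matroid α}

lemma rank2_card_le (hr : M.rank M.E = 2) {X : Finset α} (hX : M.Indep ↑X) : X.card ≤ 2 := by
  have hmem : X.card ∈ {n : ℕ | ∃ Y : Finset α, ↑Y ⊆ M.E ∧ M.Indep ↑Y ∧ Y.card = n} :=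
    ⟨X, hX.subset_ground, hX, rfl⟩
  have hbdd : BddAbove {n : ℕ | ∃ Y : Finset α, ↑Y ⊆ M.E ∧ M.Indep ↑Y ∧ Y.card = n} := by
    refine ⟨Fintype.card α, ?_⟩
    rintro n ⟨Y, -, -, rfl⟩
    exact Y.card_le_univ
  have h := le_csSup hbdd hmem
  rwa [show sSup {n : ℕ | ∃ Y : Finset α, ↑Y ⊆ M.E ∧ M.Indep ↑Y ∧ Y.card = n} = 2 from hr] at h

lemma rank2_exists_pair (hr : M.rank M.E = 2) :
    ∃ X : Finset α, ↑X ⊆ M.E ∧ M.Indep ↑X ∧ X.card = 2 := by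
  have hne : {n : ℕ | ∃ Y : Finset α, ↑Y ⊆ M.E ∧ M.Indep ↑Y ∧ Y.card = n}.Nonempty :=
    ⟨0, ∅, by simp, by simpa using M.empty_indep, rfl⟩
  have hbdd : BddAbove {n : ℕ | ∃ Y : Finset α, ↑Y ⊆ M.E ∧ M.Indep ↑Y ∧ Y.card = n} := by
    refine ⟨Fintype.card α, ?_⟩
    rintro n ⟨Y, -, -, rfl⟩
    exact Y.card_le_univ
  have h := Nat.sSup_mem hne hbdd
  rw [show sSup {n : ℕ | ∃ Y : Finset α, ↑Y ⊆ M.E ∧ M.Indep ↑Y ∧ Y.card = n} = 2 from hr] at h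
  exact h

/-- Parallel-or-equal relation on non-loops. -/
def MPara (M : Matroid α) (x y : α) : Prop :=
  M.Indep {x} ∧ M.Indep {y} ∧ (x = y ∨ ¬ M.Indep ({x, y} : Set α))

omit [Fintype α] in
lemma MPara.symm' {x y : α} (h : MPara M x y) : MPara M y x := by
  obtain ⟨h1, h2, h3⟩ := h
  refine ⟨h2, h1, ?_⟩
  rcases h3 with h3 | h3
  · exact Or.inl h3.symm
  · exact Or.inr (by rwa [Set.pair_comm])

omit [Fintype α] in
lemma MPara.refl' {x : α} (h : M.Indep {x}) : MPara M x x := ⟨h, h, Or.inl rfl⟩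

omit [Fintype α] in
lemma indep_pair_of_MPara {x x' z : α} (hp : MPara M x x') (hxz : x ≠ z)
    (h : M.Indep ({x, z} : Set α)) : M.Indep ({x', z} : Set α) := by
  obtain ⟨h1, h2, h3⟩ := hp
  rcases h3 with rfl | h3
  · exact h
  obtain ⟨e, he, hei⟩ := h2.augment h (by
    rw [Set.encard_singleton, Set.encard_pair hxz]
    norm_num)
  obtain ⟨hmem, -⟩ := he
  rcases hmem with rfl | rfl
  · exact absurd hei h3
  · rwa [Set.pair_comm]
    
omit [Fintype α] in
lemma MPara.trans' {x y z : α} (h1 : MPara M x y) (h2 : MPara M y z) :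
    MPara M x z := by
  obtain ⟨hx, hy, hxy⟩ := h1
  obtain ⟨-, hz, hyz⟩ := h2
  refine ⟨hx, hz, ?_⟩
  rcases hxy with rfl | hxy
  · exact hyz
  rcases hyz with rfl | hyz
  · exact Or.inr hxy
  by_cases hxz : x = z
  · exact Or.inl hxz
  refine Or.inr fun hind => ?_
  obtain ⟨e, he, hei⟩ := hy.augment hind (by
    rw [Set.encard_singleton, Set.encard_pair hxz]
    norm_num)
  obtain ⟨hmem, -⟩ := he
  rcases hmem with rfl | rfl
  · exact hxy hei
  · exact hyz (by rwa [Set.pair_comm])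

end MatroidRank2
section Classes

variable {α : Type} [Fintype α] {M : Matroid α}

lemma numClasses_le_of_code {S : SetSystem α} {U : Finset α} (k : ℕ)
    (c : {X : Finset α // X ⊆ U} → Fin k)
    (hc : ∀ X X', c X = c X' → S.Eqv U X.1 X'.1) : S.numClasses U ≤ k := by
  have hinj : Function.Injective (fun q : Quotient (S.eqvSetoid U) => c q.out) := by
    intro q1 q2 h
    rw [← Quotient.out_eq q1, ← Quotient.out_eq q2]
    exact Quotient.sound (hc _ _ h)
  calc S.numClasses U ≤ Nat.card (Fin k) := Nat.card_le_card_of_injective _ hinj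
    _ = k := by simp

/-- The goodness condition on a cut `U`: any two non-loops of `U` whose parallel class
crosses the cut are parallel. -/
def GoodCut (M : Matroid α) (U : Finset α) : Prop :=
  ∀ x ∈ U, ∀ x' ∈ U, M.Indep ({x} : Set α) → M.Indep ({x'} : Set α) →
    (∃ z ∈ M.toSetSystem.E \ U, M.Indep ({z} : Set α) ∧ ¬ M.Indep ({x, z} : Set α)) →
    (∃ z ∈ M.toSetSystem.E \ U, M.Indep ({z} : Set α) ∧ ¬ M.Indep ({x', z} : Set α)) →
    MPara M x x'

lemma GoodCut.of_subsingleton {U : Finset α}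
    (h : ∀ x ∈ U, ∀ x' ∈ U, x = x') : GoodCut M U := by
  intro x hx x' hx' hix hix' _ _
  rw [h x hx x' hx']
  exact MPara.refl' hix'

/-- Goodness when the complement of `U` in the ground set is a subsingleton. -/
lemma GoodCut.of_compl_subsingleton {U : Finset α}
    (h : ∀ z ∈ M.toSetSystem.E \ U, ∀ z' ∈ M.toSetSystem.E \ U, z = z') : GoodCut M U := by
  intro x hx x' hx' hix hix' ⟨z, hz, hznl, hxz⟩ ⟨z', hz', hznl', hxz'⟩
  have hzz : z = z' := h z hz z' hz'
  subst hzz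
  have h1 : MPara M x z := ⟨hix, hznl, Or.inr hxz⟩
  have h2 : MPara M x' z := ⟨hix', hznl, Or.inr hxz'⟩
  exact h1.trans' h2.symm'

lemma sing_mp (hr : M.rank M.E = 2) {U : Finset α} {x x' : α}
    (hx : x ∈ U) (hix' : M.Indep ({x'} : Set α))
    (key : ∀ z ∈ M.toSetSystem.E \ U, M.Indep ({z} : Set α) →
      M.Indep ({x, z} : Set α) → M.Indep ({x', z} : Set α))
    {Z : Finset α} (hZ : Z ⊆ M.toSetSystem.E \ U)
    (h : M.Indep ↑(({x} : Finset α) ∪ Z)) : M.Indep ↑(({x'} : Finset α) ∪ Z) := by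
  have hxZ : x ∉ Z := fun hc => (Finset.mem_sdiff.1 (hZ hc)).2 hx
  have hcard : Z.card ≤ 1 := by
    have h2 := rank2_card_le hr h
    rw [← Finset.insert_eq, Finset.card_insert_of_notMem hxZ] at h2
    omega
  rcases Finset.eq_empty_or_nonempty Z with rfl | hne
  · simpa using hix'
  · have hc1 : Z.card = 1 := le_antisymm hcard (Finset.card_pos.2 hne)
    obtain ⟨z, rfl⟩ := Finset.card_eq_one.1 hc1
    have hzmem : z ∈ M.toSetSystem.E \ U := hZ (Finset.mem_singleton_self z)
    simp only [Finset.coe_union, Finset.coe_singleton, Set.singleton_union] at h ⊢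
    have hznl : M.Indep ({z} : Set α) := h.subset (by simp)
    exact key z hzmem hznl h

lemma pair_mp (hr : M.rank M.E = 2) {U : Finset α} {X X' : Finset α}
    (hXU : X ⊆ U) (hiX' : M.Indep (↑X' : Set α)) (h2 : 2 ≤ X.card)
    {Z : Finset α} (hZ : Z ⊆ M.toSetSystem.E \ U)
    (h : M.Indep ↑(X ∪ Z)) : M.Indep ↑(X' ∪ Z) := by
  have hcard := rank2_card_le hr h
  have hXle : X.card ≤ (X ∪ Z).card := Finset.card_le_card Finset.subset_union_left
  have hXeq : X = X ∪ Z :=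
    Finset.eq_of_subset_of_card_le Finset.subset_union_left (by omega)
  have hZ0 : Z = ∅ := by
    rw [Finset.eq_empty_iff_forall_notMem]
    intro z hz
    have hzU : z ∈ U := hXU (hXeq ▸ Finset.subset_union_right hz)
    exact (Finset.mem_sdiff.1 (hZ hz)).2 hzU
  subst hZ0
  simpa using hiX'

/-- The five-valued invariant on subsets of `U` classifying `∼_U`-classes. -/
noncomputable def eqc (M : Matroid α) (U : Finset α) (X : Finset α) : Fin 5 :=
  if ¬ M.Indep (↑X : Set α) then 0
  else if X = ∅ then 1
  else if 2 ≤ X.card then 2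
  else if ∃ z ∈ M.toSetSystem.E \ U, M.Indep ({z} : Set α) ∧ ¬ M.Indep (↑X ∪ {z} : Set α)
    then 3 else 4

/-- The crossing condition. -/
def Crossing (M : Matroid α) (U : Finset α) (X : Finset α) : Prop :=
  ∃ z ∈ M.toSetSystem.E \ U, M.Indep ({z} : Set α) ∧ ¬ M.Indep (↑X ∪ {z} : Set α)

lemma eqc_eq_one_iff {U X : Finset α} :
    eqc M U X = 1 ↔ (M.Indep (↑X : Set α) ∧ X = ∅) := by
  have he : M.Indep (↑(∅ : Finset α) : Set α) := by simpa using M.empty_indep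
  rw [eqc]
  split_ifs <;> simp_all <;> omega

lemma eqc_eq_two_iff {U X : Finset α} :
    eqc M U X = 2 ↔ (M.Indep (↑X : Set α) ∧ 2 ≤ X.card) := by
  rw [eqc]
  split_ifs <;> simp_all <;> omega

lemma eqc_eq_three_iff {U X : Finset α} :
    eqc M U X = 3 ↔
      (M.Indep (↑X : Set α) ∧ X ≠ ∅ ∧ X.card < 2 ∧ Crossing M U X) := by
  rw [eqc, Crossing]
  split_ifs <;> simp_all <;> omega

lemma eqc_eq_four_iff {U X : Finset α} :
    eqc M U X = 4 ↔
      (M.Indep (↑X : Set α) ∧ X ≠ ∅ ∧ X.card < 2 ∧ ¬ Crossing M U X) := by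
  rw [eqc, Crossing]
  split_ifs <;> simp_all <;> omega

lemma singleton_step (hr : M.rank M.E = 2) {U : Finset α} (good : GoodCut M U)
    {x x' : α} (hx : x ∈ U) (hx' : x' ∈ U)
    (hix : M.Indep ({x} : Set α)) (hix' : M.Indep ({x'} : Set α))
    (hcross : Crossing M U {x} ↔ Crossing M U {x'})
    {Z : Finset α} (hZ : Z ⊆ M.toSetSystem.E \ U)
    (h : M.Indep ↑(({x} : Finset α) ∪ Z)) : M.Indep ↑(({x'} : Finset α) ∪ Z) := by
  refine sing_mp hr hx hix' ?_ hZ h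
  intro z hz hznl hxz
  by_cases hcx : Crossing M U ({x} : Finset α)
  · have hcx' := hcross.1 hcx
    rw [Crossing] at hcx hcx'
    simp only [Finset.coe_singleton, Set.singleton_union] at hcx hcx'
    have hp : MPara M x x' := good x hx x' hx' hix hix' hcx hcx'
    have hxzne : x ≠ z := fun hc => (Finset.mem_sdiff.1 hz).2 (hc ▸ hx)
    exact indep_pair_of_MPara hp hxzne hxz
  · have hcx' := hcross.not.1 hcx
    rw [Crossing] at hcx'
    push_neg at hcx'
    have := hcx' z hz hznl
    simpa only [Finset.coe_singleton, Set.singleton_union] using this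

lemma numClasses_le_five (hr : M.rank M.E = 2) {U : Finset α} (good : GoodCut M U) :
    M.toSetSystem.numClasses U ≤ 5 := by
  apply numClasses_le_of_code 5 (fun X => eqc M U X.1)
  rintro ⟨X, hXU⟩ ⟨X', hX'U⟩ h
  simp only at h
  have main : ∀ X X' : Finset α, X ⊆ U → X' ⊆ U → eqc M U X = eqc M U X' →
      ∀ Z : Finset α, Z ⊆ M.toSetSystem.E \ U →
      (X ∪ Z) ∈ M.toSetSystem.Ind → (X' ∪ Z) ∈ M.toSetSystem.Ind := by
    clear h hXU hX'U X X'
    intro X X' hXU hX'U h Z hZ hind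
    have hind' : M.Indep ↑(X ∪ Z) := hind
    show M.Indep ↑(X' ∪ Z)
    have hiX : M.Indep (↑X : Set α) :=
      hind'.subset (Finset.coe_subset.2 Finset.subset_union_left)
    by_cases hX0 : X = ∅
    · have h1 : eqc M U X = 1 := eqc_eq_one_iff.2 ⟨hiX, hX0⟩
      have h2 : X' = ∅ := (eqc_eq_one_iff.1 (h ▸ h1)).2
      subst hX0; subst h2; exact hind'
    by_cases hX2 : 2 ≤ X.card
    · have h1 : eqc M U X = 2 := eqc_eq_two_iff.2 ⟨hiX, hX2⟩
      obtain ⟨hiX', -⟩ := eqc_eq_two_iff.1 (h ▸ h1)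
      exact pair_mp hr hXU hiX' hX2 hZ hind'
    -- singleton case
    have hXc : X.card = 1 := by
      have := Finset.card_pos.2 (Finset.nonempty_of_ne_empty hX0)
      omega
    have hcross : Crossing M U X ↔ Crossing M U X' := by
      by_cases hcx : Crossing M U X
      · have h1 : eqc M U X = 3 := eqc_eq_three_iff.2 ⟨hiX, hX0, by omega, hcx⟩
        obtain ⟨-, -, -, hcx'⟩ := eqc_eq_three_iff.1 (h ▸ h1)
        exact iff_of_true hcx hcx'
      · have h1 : eqc M U X = 4 := eqc_eq_four_iff.2 ⟨hiX, hX0, by omega, hcx⟩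
        obtain ⟨-, -, -, hcx'⟩ := eqc_eq_four_iff.1 (h ▸ h1)
        exact iff_of_false hcx hcx'
    have hX' : M.Indep (↑X' : Set α) ∧ X' ≠ ∅ ∧ X'.card < 2 := by
      by_cases hcx : Crossing M U X
      · have h1 : eqc M U X = 3 := eqc_eq_three_iff.2 ⟨hiX, hX0, by omega, hcx⟩
        obtain ⟨a, b, c, -⟩ := eqc_eq_three_iff.1 (h ▸ h1)
        exact ⟨a, b, c⟩
      · have h1 : eqc M U X = 4 := eqc_eq_four_iff.2 ⟨hiX, hX0, by omega, hcx⟩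
        obtain ⟨a, b, c, -⟩ := eqc_eq_four_iff.1 (h ▸ h1)
        exact ⟨a, b, c⟩
    obtain ⟨hiX', hX'0, hX'2⟩ := hX'
    have hX'c : X'.card = 1 := by
      have := Finset.card_pos.2 (Finset.nonempty_of_ne_empty hX'0)
      omega
    obtain ⟨x, rfl⟩ := Finset.card_eq_one.1 hXc
    obtain ⟨x', rfl⟩ := Finset.card_eq_one.1 hX'c
    have hx : x ∈ U := hXU (Finset.mem_singleton_self x)
    have hx' : x' ∈ U := hX'U (Finset.mem_singleton_self x')
    simp only [Finset.coe_singleton] at hiX hiX'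
    exact singleton_step hr good hx hx' hiX hiX' hcross hZ hind'
  intro Z hZ
  exact ⟨main X X' hXU hX'U h Z hZ, main X' X hX'U hXU h.symm Z hZ⟩

end Classes
section Caterpillar

/-- Vertices of the caterpillar tree: `n` leaves and `n - 2` spine vertices. -/
abbrev CatV (n : ℕ) := Fin n ⊕ Fin (n - 2)

/-- Adjacency of the caterpillar: leaf `i` attaches to spine vertex `min (i-1) (n-3)`,
and the spine is a path. -/
def catAdj (n : ℕ) : CatV n → CatV n → Prop
  | Sum.inl _, Sum.inl _ => False
  | Sum.inl i, Sum.inr j => (j : ℕ) = min ((i : ℕ) - 1) (n - 3)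
  | Sum.inr j, Sum.inl i => (j : ℕ) = min ((i : ℕ) - 1) (n - 3)
  | Sum.inr j, Sum.inr k => (j : ℕ) + 1 = k ∨ (k : ℕ) + 1 = j

instance catAdjDec (n : ℕ) : DecidableRel (catAdj n) := fun a b =>
  match a, b with
  | Sum.inl _, Sum.inl _ => isFalse (fun h => h)
  | Sum.inl _, Sum.inr _ => inferInstanceAs (Decidable (_ = _))
  | Sum.inr _, Sum.inl _ => inferInstanceAs (Decidable (_ = _))
  | Sum.inr _, Sum.inr _ => inferInstanceAs (Decidable (_ ∨ _))

/-- The caterpillar graph. -/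
def catG (n : ℕ) : SimpleGraph (CatV n) where
  Adj := catAdj n
  symm := by
    constructor
    rintro (i | j) (i' | j') h <;> simp only [catAdj] at h ⊢ <;> omega
  loopless := by
    constructor
    rintro (i | j) h <;> simp only [catAdj] at h <;> omega

instance (n : ℕ) : DecidableRel (catG n).Adj := catAdjDec n

lemma catG_adj {n : ℕ} (a b : CatV n) : (catG n).Adj a b ↔ catAdj n a b := Iff.rfl

lemma catG_nbr_inl {n : ℕ} (hn : 3 ≤ n) (i : Fin n) :
    (catG n).neighborFinset (Sum.inl i) =
      {Sum.inr ⟨min ((i : ℕ) - 1) (n - 3), by omega⟩} := by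
  ext b
  rw [SimpleGraph.mem_neighborFinset, catG_adj]
  rcases b with i' | j
  · simp only [catAdj, Finset.mem_singleton]
    constructor
    · intro h; exact h.elim
    · intro h; exact absurd h (by simp)
  · simp only [catAdj, Finset.mem_singleton, Sum.inr.injEq, Fin.ext_iff]

lemma catG_degree_inl {n : ℕ} (hn : 3 ≤ n) (i : Fin n) :
    (catG n).degree (Sum.inl i) = 1 := by
  rw [SimpleGraph.degree, catG_nbr_inl hn]
  exact Finset.card_singleton _

lemma catG_degree_inr {n : ℕ} (hn : 3 ≤ n) (j : Fin (n - 2)) :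
    (catG n).degree (Sum.inr j) = 3 := by
  have hj := j.isLt
  have finish : ∀ b1 b2 b3 : CatV n, b1 ≠ b2 → b1 ≠ b3 → b2 ≠ b3 →
      (∀ b, (catG n).Adj (Sum.inr j) b ↔ (b = b1 ∨ b = b2 ∨ b = b3)) →
      (catG n).degree (Sum.inr j) = 3 := by
    intro b1 b2 b3 h12 h13 h23 hkey
    have hset : (catG n).neighborFinset (Sum.inr j) = {b1, b2, b3} := by
      ext b
      rw [SimpleGraph.mem_neighborFinset, hkey]
      simp
    rw [SimpleGraph.degree, hset]
    rw [Finset.card_insert_of_notMem (by simp [h12, h13]),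
      Finset.card_insert_of_notMem (by simp [h23]), Finset.card_singleton]
  by_cases h0 : (j : ℕ) = 0
  · by_cases h3 : n = 3
    · subst h3
      refine finish (Sum.inl ⟨0, by omega⟩) (Sum.inl ⟨1, by omega⟩) (Sum.inl ⟨2, by omega⟩)
        (by simp [Fin.ext_iff]) (by simp [Fin.ext_iff]) (by simp [Fin.ext_iff]) ?_
      rintro (i | k)
      · have hi := i.isLt
        simp only [catG_adj, catAdj, Sum.inl.injEq, Sum.inr.injEq, Fin.ext_iff, reduceCtorEq,
          or_self, false_iff, iff_false]
        omega
      · have hk := k.isLt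
        simp only [catG_adj, catAdj, Sum.inl.injEq, Sum.inr.injEq, Fin.ext_iff, reduceCtorEq,
          or_self, false_iff, iff_false]
        omega
    · refine finish (Sum.inl ⟨0, by omega⟩) (Sum.inl ⟨1, by omega⟩) (Sum.inr ⟨1, by omega⟩)
        (by simp [Fin.ext_iff]) (by simp) (by simp) ?_
      rintro (i | k)
      · have hi := i.isLt
        simp only [catG_adj, catAdj, Sum.inl.injEq, Sum.inr.injEq, Fin.ext_iff, reduceCtorEq,
          or_false, false_or, or_self, false_iff, iff_false]
        omega
      · have hk := k.isLt
        simp only [catG_adj, catAdj, Sum.inl.injEq, Sum.inr.injEq, Fin.ext_iff, reduceCtorEq,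
          or_false, false_or, or_self, false_iff, iff_false]
        omega
  · by_cases htop : (j : ℕ) = n - 3
    · refine finish (Sum.inl ⟨n - 2, by omega⟩) (Sum.inl ⟨n - 1, by omega⟩)
        (Sum.inr ⟨n - 4, by omega⟩)
        (by simp only [ne_eq, Sum.inl.injEq, Fin.ext_iff]; omega) (by simp) (by simp) ?_
      rintro (i | k)
      · have hi := i.isLt
        simp only [catG_adj, catAdj, Sum.inl.injEq, Sum.inr.injEq, Fin.ext_iff, reduceCtorEq,
          or_false, false_or, or_self, false_iff, iff_false]
        omega
      · have hk := k.isLt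
        simp only [catG_adj, catAdj, Sum.inl.injEq, Sum.inr.injEq, Fin.ext_iff, reduceCtorEq,
          or_false, false_or, or_self, false_iff, iff_false]
        omega
    · refine finish (Sum.inl ⟨(j : ℕ) + 1, by omega⟩) (Sum.inr ⟨(j : ℕ) - 1, by omega⟩)
        (Sum.inr ⟨(j : ℕ) + 1, by omega⟩)
        (by simp) (by simp) (by simp only [ne_eq, Sum.inr.injEq, Fin.ext_iff]; omega) ?_
      rintro (i | k)
      · have hi := i.isLt
        simp only [catG_adj, catAdj, Sum.inl.injEq, Sum.inr.injEq, Fin.ext_iff, reduceCtorEq,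
          or_false, false_or, or_self, false_iff, iff_false]
        omega
      · have hk := k.isLt
        simp only [catG_adj, catAdj, Sum.inl.injEq, Sum.inr.injEq, Fin.ext_iff, reduceCtorEq,
          or_false, false_or, or_self, false_iff, iff_false]
        omega

lemma chain_reach {n : ℕ} (G' : SimpleGraph (CatV n)) (a b : Fin (n - 2))
    (hab : (a : ℕ) ≤ b)
    (hstep : ∀ l : ℕ, ∀ hl1 : l < n - 2, ∀ hl2 : l + 1 < n - 2, (a : ℕ) ≤ l → l + 1 ≤ (b : ℕ) →
      G'.Adj (Sum.inr ⟨l, hl1⟩) (Sum.inr ⟨l + 1, hl2⟩)) :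
    G'.Reachable (Sum.inr a) (Sum.inr b) := by
  by_cases hab2 : a = b
  · subst hab2; rfl
  · have hlt : (a : ℕ) < b := lt_of_le_of_ne hab (fun h => hab2 (Fin.ext h))
    have hb := b.isLt
    have step1 : G'.Adj (Sum.inr a) (Sum.inr ⟨(a : ℕ) + 1, by omega⟩) :=
      hstep a a.isLt (by omega) le_rfl hlt
    have hrec : G'.Reachable (Sum.inr (⟨(a : ℕ) + 1, by omega⟩ : Fin (n - 2))) (Sum.inr b) := by
      refine chain_reach G' ⟨(a : ℕ) + 1, by omega⟩ b
        (show (a : ℕ) + 1 ≤ (b : ℕ) by omega) ?_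
      intro l hl1 hl2 h1 h2
      have h1' : (a : ℕ) + 1 ≤ l := h1
      exact hstep l hl1 hl2 (by omega) h2
    exact step1.reachable.trans hrec
termination_by (b : ℕ) - (a : ℕ)
decreasing_by
  have h1' : (a : ℕ) < (b : ℕ) := hlt
  show (b : ℕ) - ((a : ℕ) + 1) < (b : ℕ) - (a : ℕ)
  omega

lemma catG_reach_zero {n : ℕ} (hn : 3 ≤ n) (v : CatV n) :
    (catG n).Reachable v (Sum.inr ⟨0, by omega⟩) := by
  have base : ∀ j : Fin (n - 2), (catG n).Reachable (Sum.inr ⟨0, by omega⟩) (Sum.inr j) := by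
    intro j
    refine chain_reach _ _ _ (show (0 : ℕ) ≤ (j : ℕ) by omega) ?_
    intro l hl1 hl2 _ _
    rw [catG_adj]
    exact Or.inl rfl
  rcases v with i | j
  · have hadj : (catG n).Adj (Sum.inl i) (Sum.inr ⟨min ((i : ℕ) - 1) (n - 3), by omega⟩) := by
      rw [catG_adj]; rfl
    exact hadj.reachable.trans (base _).symm
  · exact (base j).symm

lemma catG_connected {n : ℕ} (hn : 3 ≤ n) : (catG n).Connected := by
  rw [SimpleGraph.connected_iff_exists_forall_reachable]
  exact ⟨Sum.inr ⟨0, by omega⟩, fun w => (catG_reach_zero hn w).symm⟩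

/-- After deleting its unique edge, a leaf is isolated. -/
lemma catG_leaf_isolated {n : ℕ} (i : Fin n) (j : Fin (n - 2))
    (hij : (j : ℕ) = min ((i : ℕ) - 1) (n - 3)) :
    ∀ b, ¬ ((catG n).deleteEdges {s(Sum.inl i, Sum.inr j)}).Adj (Sum.inl i) b := by
  intro b hb
  rw [SimpleGraph.deleteEdges_adj] at hb
  obtain ⟨hadj, hmem⟩ := hb
  rcases b with i' | k
  · exact hadj
  · apply hmem
    have hk : k = j := Fin.ext (by rw [hij]; exact hadj)
    rw [hk, Set.mem_singleton_iff]

/-- The side function for the spine-edge cut between positions `p` and `p + 1`. -/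
def spineSide (n p : ℕ) : CatV n → Bool
  | Sum.inl i => decide ((i : ℕ) ≤ p + 1)
  | Sum.inr k => decide ((k : ℕ) ≤ p)

lemma spineSide_const {n : ℕ} {j k : Fin (n - 2)} (hjk : (k : ℕ) = (j : ℕ) + 1) :
    ∀ a b, ((catG n).deleteEdges {s(Sum.inr j, Sum.inr k)}).Adj a b →
      spineSide n (j : ℕ) a = spineSide n (j : ℕ) b := by
  have hk := k.isLt
  intro a b hab
  rw [SimpleGraph.deleteEdges_adj] at hab
  obtain ⟨hadj, hmem⟩ := hab
  rcases a with i | l <;> rcases b with i' | l'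
  · exact hadj.elim
  · have hi := i.isLt
    have hl' := l'.isLt
    have h' : (l' : ℕ) = min ((i : ℕ) - 1) (n - 3) := hadj
    simp only [spineSide, decide_eq_decide]
    omega
  · have hi := i'.isLt
    have hl := l.isLt
    have h' : (l : ℕ) = min ((i' : ℕ) - 1) (n - 3) := hadj
    simp only [spineSide, decide_eq_decide]
    omega
  · have hl := l.isLt
    have hl' := l'.isLt
    have h' : (l : ℕ) + 1 = l' ∨ (l' : ℕ) + 1 = l := hadj
    have hne1 : ¬ ((l : ℕ) = j ∧ (l' : ℕ) = k) := by
      rintro ⟨h1, h2⟩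
      exact hmem (by rw [Fin.ext h1, Fin.ext h2]; exact Set.mem_singleton _)
    have hne2 : ¬ ((l : ℕ) = k ∧ (l' : ℕ) = j) := by
      rintro ⟨h1, h2⟩
      refine hmem ?_
      rw [Fin.ext h1, Fin.ext h2, Set.mem_singleton_iff]
      exact Sym2.eq_swap
    simp only [spineSide, decide_eq_decide]
    omega

/-- Reachability to the two sides of a spine cut. -/
lemma spineCut_reach {n : ℕ} {j k : Fin (n - 2)} (hjk : (k : ℕ) = (j : ℕ) + 1) (v : CatV n) :
    (spineSide n (j : ℕ) v = true →
      ((catG n).deleteEdges {s(Sum.inr j, Sum.inr k)}).Reachable v (Sum.inr j)) ∧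
    (spineSide n (j : ℕ) v = false →
      ((catG n).deleteEdges {s(Sum.inr j, Sum.inr k)}).Reachable v (Sum.inr k)) := by
  have hk := k.isLt
  have hj := j.isLt
  have hstep : ∀ l : ℕ, ∀ hl1 : l < n - 2, ∀ hl2 : l + 1 < n - 2, l ≠ (j : ℕ) →
      ((catG n).deleteEdges {s(Sum.inr j, Sum.inr k)}).Adj
        (Sum.inr ⟨l, hl1⟩) (Sum.inr ⟨l + 1, hl2⟩) := by
    intro l hl1 hl2 hlj
    rw [SimpleGraph.deleteEdges_adj]
    refine ⟨Or.inl rfl, ?_⟩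
    intro hmem
    rw [Set.mem_singleton_iff, Sym2.eq_iff] at hmem
    rcases hmem with ⟨h1, h2⟩ | ⟨h1, h2⟩
    · exact hlj (congrArg Fin.val (Sum.inr.inj h1))
    · have e1 : l = (k : ℕ) := congrArg Fin.val (Sum.inr.inj h1)
      have e2 : l + 1 = (j : ℕ) := congrArg Fin.val (Sum.inr.inj h2)
      omega
  have hleaf : ∀ i : Fin n, ((catG n).deleteEdges {s(Sum.inr j, Sum.inr k)}).Adj
      (Sum.inl i) (Sum.inr ⟨min ((i : ℕ) - 1) (n - 3), by omega⟩) := by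
    intro i
    rw [SimpleGraph.deleteEdges_adj]
    refine ⟨rfl, ?_⟩
    intro hmem
    rw [Set.mem_singleton_iff, Sym2.eq_iff] at hmem
    rcases hmem with ⟨h1, -⟩ | ⟨h1, -⟩ <;> exact nomatch h1
  constructor
  · intro hv
    rcases v with i | l
    · have hi := i.isLt
      simp only [spineSide, decide_eq_true_eq] at hv
      refine (hleaf i).reachable.trans (chain_reach _ _ _
        (show min ((i : ℕ) - 1) (n - 3) ≤ (j : ℕ) by omega) ?_)
      intro m hl1 hl2 h1 h2
      have h1' : min ((i : ℕ) - 1) (n - 3) ≤ m := h1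
      exact hstep m hl1 hl2 (by omega)
    · have hl := l.isLt
      simp only [spineSide, decide_eq_true_eq] at hv
      refine chain_reach _ _ _ (show (l : ℕ) ≤ (j : ℕ) from hv) ?_
      intro m hl1 hl2 h1 h2
      exact hstep m hl1 hl2 (by omega)
  · intro hv
    rcases v with i | l
    · have hi := i.isLt
      simp only [spineSide, decide_eq_false_iff_not, not_le] at hv
      refine (hleaf i).reachable.trans ((chain_reach _ _ _
        (show (k : ℕ) ≤ min ((i : ℕ) - 1) (n - 3) by omega) ?_).symm)
      intro m hl1 hl2 h1 h2
      have h1' : (k : ℕ) ≤ m := h1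
      exact hstep m hl1 hl2 (by omega)
    · have hl := l.isLt
      simp only [spineSide, decide_eq_false_iff_not, not_le] at hv
      refine (chain_reach _ _ _ (show (k : ℕ) ≤ (l : ℕ) by omega) ?_).symm
      intro m hl1 hl2 h1 h2
      have h1' : (k : ℕ) ≤ m := h1
      exact hstep m hl1 hl2 (by omega)

lemma catG_isTree {n : ℕ} (hn : 3 ≤ n) : (catG n).IsTree := by
  refine ⟨catG_connected hn, ?_⟩
  rw [SimpleGraph.isAcyclic_iff_forall_adj_isBridge]
  intro v w hadj
  rw [SimpleGraph.isBridge_iff]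
  intro hreach
  have hreach' : ((catG n).deleteEdges {s(v, w)}).Reachable v w := hreach
  clear hreach
  rcases v with i | j <;> rcases w with i' | j'
  · exact hadj.elim
  · have hiso := catG_leaf_isolated i j' hadj
    have := reachable_eq_of_isolated hiso hreach'.symm
    simp at this
  · have hij : (j : ℕ) = min ((i' : ℕ) - 1) (n - 3) := hadj
    have hiso := catG_leaf_isolated i' j hij
    have hrw : ({s(Sum.inr j, Sum.inl i')} : Set (Sym2 (CatV n)))
        = {s(Sum.inl i', Sum.inr j)} := by rw [Sym2.eq_swap]
    rw [hrw] at hreach'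
    have := reachable_eq_of_isolated hiso hreach'
    simp at this
  · have hj := j.isLt
    have hj' := j'.isLt
    have h' : (j : ℕ) + 1 = j' ∨ (j' : ℕ) + 1 = j := hadj
    rcases h' with h' | h'
    · have := reachable_const (spineSide_const h'.symm) hreach'
      simp only [spineSide, decide_eq_decide] at this
      omega
    · have hrw : ({s(Sum.inr j, Sum.inr j')} : Set (Sym2 (CatV n)))
          = {s(Sum.inr j', Sum.inr j)} := by rw [Sym2.eq_swap]
      rw [hrw] at hreach'
      have := reachable_const (spineSide_const h'.symm) hreach'
      simp only [spineSide, decide_eq_decide] at this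
      omega

end Caterpillar
section SortKey

variable {α : Type} [Fintype α]

/-- An injective enumeration of `α`. -/
noncomputable def aidx (a : α) : ℕ := (Fintype.equivFin α a : ℕ)

lemma aidx_inj {a b : α} (h : aidx a = aidx b) : a = b := by
  have := Fin.ext h
  exact (Fintype.equivFin α).injective this

/-- The parallel class of an element within the ground set. -/
noncomputable def classF (M : Matroid α) (a : α) : Finset α :=
  M.toSetSystem.E.filter (fun y => MPara M a y)

lemma classF_eq_of_para {M : Matroid α} {x z : α} (h : MPara M x z) :
    classF M x = classF M z := by
  unfold classF
  apply Finset.filter_congr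
  intro y _
  constructor
  · intro hy; exact (h.symm'.trans' hy)
  · intro hy; exact (h.trans' hy)

/-- The key of an element: the least index in its parallel class. -/
noncomputable def mkey (M : Matroid α) (a : α) : ℕ :=
  if h : (classF M a).Nonempty then ((classF M a).image aidx).min' (h.image _) else aidx a

lemma self_mem_classF {M : Matroid α} {x : α} (hx : x ∈ M.toSetSystem.E)
    (hix : M.Indep ({x} : Set α)) : x ∈ classF M x := by
  rw [classF, Finset.mem_filter]
  exact ⟨hx, MPara.refl' hix⟩

lemma mkey_eq_of_para {M : Matroid α} {x z : α} (hx : x ∈ M.toSetSystem.E)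
    (h : MPara M x z) : mkey M x = mkey M z := by
  have hc := classF_eq_of_para h
  have hne : (classF M x).Nonempty := ⟨x, self_mem_classF hx h.1⟩
  have hne' : (classF M z).Nonempty := hc ▸ hne
  rw [mkey, mkey, dif_pos hne, dif_pos hne']
  simp only [hc]

lemma mkey_attained {M : Matroid α} {x : α} (hx : x ∈ M.toSetSystem.E)
    (hix : M.Indep ({x} : Set α)) : ∃ y ∈ classF M x, aidx y = mkey M x := by
  have hne : (classF M x).Nonempty := ⟨x, self_mem_classF hx hix⟩
  rw [mkey, dif_pos hne]
  have := Finset.min'_mem ((classF M x).image aidx) (hne.image _)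
  rw [Finset.mem_image] at this
  obtain ⟨y, hy, hyx⟩ := this
  exact ⟨y, hy, hyx⟩

lemma para_of_mkey_eq {M : Matroid α} {x x' : α}
    (hx : x ∈ M.toSetSystem.E) (hx' : x' ∈ M.toSetSystem.E)
    (hix : M.Indep ({x} : Set α)) (hix' : M.Indep ({x'} : Set α))
    (h : mkey M x = mkey M x') : MPara M x x' := by
  obtain ⟨y, hy, hyk⟩ := mkey_attained hx hix
  obtain ⟨y', hy', hyk'⟩ := mkey_attained hx' hix'
  have hyy : y = y' := aidx_inj (by rw [hyk, hyk', h])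
  subst hyy
  rw [classF, Finset.mem_filter] at hy hy'
  exact hy.2.trans' hy'.2.symm'

/-- The sorting relation: lexicographic on `(mkey, aidx)`. -/
def srel (M : Matroid α) (a b : α) : Prop :=
  mkey M a < mkey M b ∨ (mkey M a = mkey M b ∧ aidx a ≤ aidx b)

lemma srel_trans {M : Matroid α} : ∀ a b c : α, srel M a b → srel M b c → srel M a c := by
  intro a b c h1 h2
  rcases h1 with h1 | ⟨h1, h1'⟩ <;> rcases h2 with h2 | ⟨h2, h2'⟩ <;>
    first
    | exact Or.inl (by omega)
    | exact Or.inr ⟨by omega, by omega⟩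

lemma srel_antisymm {M : Matroid α} : ∀ a b : α, srel M a b → srel M b a → a = b := by
  intro a b h1 h2
  apply aidx_inj
  rcases h1 with h1 | ⟨h1, h1'⟩ <;> rcases h2 with h2 | ⟨h2, h2'⟩ <;> omega

lemma srel_total {M : Matroid α} : ∀ a b : α, srel M a b ∨ srel M b a := by
  intro a b
  unfold srel
  rcases le_total (aidx a) (aidx b) with h | h <;>
  rcases lt_trichotomy (mkey M a) (mkey M b) with h' | h' | h' <;>
    first
    | exact Or.inl (Or.inl h')
    | exact Or.inr (Or.inl h')
    | exact Or.inl (Or.inr ⟨h', by omega⟩)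
    | exact Or.inr (Or.inr ⟨h'.symm, by omega⟩)

noncomputable instance srelDecidable (M : Matroid α) : DecidableRel (srel M) :=
  Classical.decRel _

instance srelIsTrans (M : Matroid α) : IsTrans α (srel M) := ⟨srel_trans⟩
instance srelIsAntisymm (M : Matroid α) : IsAntisymm α (srel M) := ⟨srel_antisymm⟩
instance srelIsTotal (M : Matroid α) : IsTotal α (srel M) := ⟨srel_total⟩

/-- The ground set sorted with parallel classes consecutive. -/
noncomputable def elist (M : Matroid α) : List α := M.toSetSystem.E.sort (srel M)

lemma elist_nodup (M : Matroid α) : (elist M).Nodup := Finset.sort_nodup _ _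
lemma mem_elist {M : Matroid α} {a : α} : a ∈ elist M ↔ a ∈ M.toSetSystem.E :=
  Finset.mem_sort _
lemma elist_length (M : Matroid α) : (elist M).length = M.toSetSystem.E.card :=
  Finset.length_sort _

lemma mkey_mono {M : Matroid α} (i j : Fin (elist M).length) (hij : (i : ℕ) ≤ (j : ℕ)) :
    mkey M ((elist M).get i) ≤ mkey M ((elist M).get j) := by
  rcases eq_or_lt_of_le hij with h | h
  · rw [Fin.ext h]
  · have hs : (elist M).Pairwise (srel M) := Finset.pairwise_sort _ _
    have := hs.rel_get_of_lt (show i < j from h)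
    rcases this with h' | ⟨h', -⟩ <;> omega

lemma indexOf_elist_lt {M : Matroid α} {a : α} (ha : a ∈ M.toSetSystem.E) :
    (elist M).idxOf a < (elist M).length :=
  List.idxOf_lt_length_iff.2 (mem_elist.2 ha)

lemma get_indexOf_elist {M : Matroid α} {a : α} (ha : a ∈ M.toSetSystem.E) :
    (elist M).get ⟨(elist M).idxOf a, indexOf_elist_lt ha⟩ = a :=
  List.idxOf_get _

/-- The sandwich lemma: if `x` lies at position `≤ p` and its parallel companion `z`
lies at position `> p`, then the key of `x` agrees with the key at position `p`. -/
lemma mkey_eq_get_p {M : Matroid α} {x z : α}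
    (hx : x ∈ M.toSetSystem.E) (hz : z ∈ M.toSetSystem.E) (hpara : MPara M x z)
    {p : ℕ} (hp : p < (elist M).length)
    (h1 : (elist M).idxOf x ≤ p) (h2 : p < (elist M).idxOf z) :
    mkey M x = mkey M ((elist M).get ⟨p, hp⟩) := by
  have e1 : mkey M x ≤ mkey M ((elist M).get ⟨p, hp⟩) := by
    have := mkey_mono ⟨(elist M).idxOf x, indexOf_elist_lt hx⟩ ⟨p, hp⟩ h1
    rwa [get_indexOf_elist hx] at this
  have e2 : mkey M ((elist M).get ⟨p, hp⟩) ≤ mkey M z := by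
    have := mkey_mono ⟨p, hp⟩ ⟨(elist M).idxOf z, indexOf_elist_lt hz⟩ (le_of_lt h2)
    rwa [get_indexOf_elist hz] at this
  have e3 : mkey M x = mkey M z := mkey_eq_of_para hx hpara
  omega

/-- Goodness for a prefix cut. -/
lemma goodCut_prefix {M : Matroid α} {U : Finset α} (hUE : U ⊆ M.toSetSystem.E) {p : ℕ}
    (hp : p < (elist M).length)
    (hchar : ∀ a ∈ M.toSetSystem.E, (a ∈ U ↔ (elist M).idxOf a ≤ p)) : GoodCut M U := by
  rintro x hx x' hx' hix hix' ⟨z, hz, hznl, hxz⟩ ⟨z', hz', hznl', hxz'⟩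
  have hxE := hUE hx
  have hx'E := hUE hx'
  rw [Finset.mem_sdiff] at hz hz'
  have hzp : p < (elist M).idxOf z := by
    by_contra hc
    exact hz.2 ((hchar z hz.1).2 (by omega))
  have hz'p : p < (elist M).idxOf z' := by
    by_contra hc
    exact hz'.2 ((hchar z' hz'.1).2 (by omega))
  have k1 := mkey_eq_get_p hxE hz.1 ⟨hix, hznl, Or.inr hxz⟩ hp ((hchar x hxE).1 hx) hzp
  have k2 := mkey_eq_get_p hx'E hz'.1 ⟨hix', hznl', Or.inr hxz'⟩ hp ((hchar x' hx'E).1 hx') hz'p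
  exact para_of_mkey_eq hxE hx'E hix hix' (k1.trans k2.symm)

/-- Goodness for a suffix cut. -/
lemma goodCut_suffix {M : Matroid α} {U : Finset α} (hUE : U ⊆ M.toSetSystem.E) {p : ℕ}
    (hp : p < (elist M).length)
    (hchar : ∀ a ∈ M.toSetSystem.E, (a ∈ U ↔ p < (elist M).idxOf a)) : GoodCut M U := by
  rintro x hx x' hx' hix hix' ⟨z, hz, hznl, hxz⟩ ⟨z', hz', hznl', hxz'⟩
  have hxE := hUE hx
  have hx'E := hUE hx'
  rw [Finset.mem_sdiff] at hz hz'
  have hzp : (elist M).idxOf z ≤ p := by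
    by_contra hc
    exact hz.2 ((hchar z hz.1).2 (by omega))
  have hz'p : (elist M).idxOf z' ≤ p := by
    by_contra hc
    exact hz'.2 ((hchar z' hz'.1).2 (by omega))
  have k1 := mkey_eq_get_p hz.1 hxE ⟨hznl, hix, Or.inr (by rwa [Set.pair_comm])⟩ hp hzp
    ((hchar x hxE).1 hx)
  have k2 := mkey_eq_get_p hz'.1 hx'E ⟨hznl', hix', Or.inr (by rwa [Set.pair_comm])⟩ hp hz'p
    ((hchar x' hx'E).1 hx')
  have e1 : mkey M x = mkey M z := mkey_eq_of_para hxE ⟨hix, hznl, Or.inr hxz⟩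
  have e2 : mkey M x' = mkey M z' := mkey_eq_of_para hx'E ⟨hix', hznl', Or.inr hxz'⟩
  exact para_of_mkey_eq hxE hx'E hix hix' (by omega)

end SortKey
section Assembly

variable {α : Type} [Fintype α]

lemma spine_reach_leafdel {n : ℕ} (i : Fin n) (j : Fin (n - 2)) (k k' : Fin (n - 2)) :
    ((catG n).deleteEdges {s(Sum.inl i, Sum.inr j)}).Reachable (Sum.inr k) (Sum.inr k') := by
  have hstep : ∀ l : ℕ, ∀ hl1 : l < n - 2, ∀ hl2 : l + 1 < n - 2,
      ((catG n).deleteEdges {s(Sum.inl i, Sum.inr j)}).Adj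
        (Sum.inr ⟨l, hl1⟩) (Sum.inr ⟨l + 1, hl2⟩) := by
    intro l hl1 hl2
    rw [SimpleGraph.deleteEdges_adj]
    refine ⟨Or.inl rfl, ?_⟩
    intro hmem
    rw [Set.mem_singleton_iff, Sym2.eq_iff] at hmem
    rcases hmem with ⟨h1, -⟩ | ⟨-, h2⟩
    · exact nomatch h1
    · exact nomatch h2
  rcases le_total (k : ℕ) (k' : ℕ) with h | h
  · exact chain_reach _ _ _ h (fun l h1 h2 _ _ => hstep l h1 h2)
  · exact (chain_reach _ _ _ h (fun l h1 h2 _ _ => hstep l h1 h2)).symm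

lemma leafdel_reach {n : ℕ} (hn : 3 ≤ n) (i i' : Fin n) (j : Fin (n - 2))
    (hij : (j : ℕ) = min ((i : ℕ) - 1) (n - 3)) :
    ((catG n).deleteEdges {s(Sum.inl i, Sum.inr j)}).Reachable (Sum.inl i') (Sum.inr j)
      ↔ i' ≠ i := by
  constructor
  · intro r heq
    subst heq
    have h2 := reachable_eq_of_isolated (catG_leaf_isolated i' j hij) r.symm
    exact nomatch h2
  · intro hne
    have hatt : ((catG n).deleteEdges {s(Sum.inl i, Sum.inr j)}).Adj (Sum.inl i')
        (Sum.inr ⟨min ((i' : ℕ) - 1) (n - 3), by omega⟩) := by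
      rw [SimpleGraph.deleteEdges_adj]
      refine ⟨rfl, ?_⟩
      intro hmem
      rw [Set.mem_singleton_iff, Sym2.eq_iff] at hmem
      rcases hmem with ⟨h1, -⟩ | ⟨h1, -⟩
      · exact hne (Sum.inl.inj h1)
      · exact nomatch h1
    exact hatt.reachable.trans (spine_reach_leafdel i j _ j)

lemma mem_SE {M : Matroid α} {a : α} : a ∈ M.toSetSystem.E ↔ a ∈ M.E :=
  Set.Finite.mem_toFinset _

lemma two_le_card (M : Matroid α) (hr : M.rank M.E = 2) : 2 ≤ M.toSetSystem.E.card := by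
  obtain ⟨X, hXsub, hXind, hXcard⟩ := rank2_exists_pair hr
  have hXS : X ⊆ M.toSetSystem.E := fun a ha => mem_SE.2 (hXsub ha)
  calc 2 = X.card := hXcard.symm
    _ ≤ _ := Finset.card_le_card hXS

/-- The position of an element in the sorted enumeration. -/
noncomputable def posFin (M : Matroid α) (hn : 0 < M.toSetSystem.E.card) (a : α) :
    Fin M.toSetSystem.E.card :=
  if h : a ∈ elist M then
    ⟨(elist M).idxOf a, by rw [← elist_length M]; exact List.idxOf_lt_length_iff.2 h⟩
  else ⟨0, hn⟩

lemma posFin_val {M : Matroid α} (hn : 0 < M.toSetSystem.E.card) {a : α}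
    (ha : a ∈ M.toSetSystem.E) : (posFin M hn a : ℕ) = (elist M).idxOf a := by
  rw [posFin, dif_pos (mem_elist.2 ha)]

lemma posFin_injOn {M : Matroid α} (hn : 0 < M.toSetSystem.E.card) {a b : α}
    (ha : a ∈ M.toSetSystem.E) (hb : b ∈ M.toSetSystem.E)
    (hab : posFin M hn a = posFin M hn b) : a = b := by
  have h1 : (elist M).idxOf a = (elist M).idxOf b := by
    have := congrArg Fin.val hab
    rwa [posFin_val hn ha, posFin_val hn hb] at this
  exact (List.idxOf_inj (mem_elist.2 ha)).1 h1

lemma posFin_surj {M : Matroid α} (hn : 0 < M.toSetSystem.E.card)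
    (i : Fin M.toSetSystem.E.card) :
    ∃ a ∈ M.toSetSystem.E, posFin M hn a = i := by
  have hi : (i : ℕ) < (elist M).length := by rw [elist_length]; exact i.isLt
  refine ⟨(elist M).get ⟨i, hi⟩, ?_, ?_⟩
  · exact mem_elist.1 (List.get_mem _ _)
  · have hmem : (elist M).get ⟨i, hi⟩ ∈ M.toSetSystem.E :=
      mem_elist.1 (List.get_mem _ _)
    apply Fin.ext
    rw [posFin_val hn hmem]
    have h2 : (elist M).get ⟨(elist M).idxOf ((elist M).get ⟨i, hi⟩),
        indexOf_elist_lt hmem⟩ = (elist M).get ⟨i, hi⟩ := List.idxOf_get _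
    have := ((elist_nodup M).get_inj_iff).1 h2
    exact congrArg Fin.val this

/-- The caterpillar decomposition of a rank-2 matroid (case of at least 3 elements). -/
noncomputable def catDecomp (M : Matroid α) (hn3 : 3 ≤ M.toSetSystem.E.card) :
    Decomp α M.toSetSystem.E where
  V := CatV M.toSetSystem.E.card
  G := catG _
  isTree := catG_isTree hn3
  subcubic := by
    rintro (i | j)
    · exact Or.inl (catG_degree_inl hn3 i)
    · exact Or.inr (catG_degree_inr hn3 j)
  leaf := fun a => Sum.inl (posFin M (by omega) a)
  leaf_degree := fun a _ => catG_degree_inl hn3 _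
  leaf_injOn := by
    intro a ha b hb hab
    exact posFin_injOn _ ha hb (Sum.inl.inj hab)
  leaf_surj := by
    intro v hv
    rcases v with i | j
    · obtain ⟨a, ha, hpa⟩ := posFin_surj (show 0 < M.toSetSystem.E.card by omega) i
      exact ⟨a, ha, congrArg Sum.inl hpa⟩
    · rw [catG_degree_inr hn3 j] at hv
      omega

lemma catDecomp_good (M : Matroid α) (hn3 : 3 ≤ M.toSetSystem.E.card)
    (U : Finset α) (hU : (catDecomp M hn3).Displays U) : GoodCut M U := by
  set n := M.toSetSystem.E.card with hn
  have hn0 : 0 < n := by omega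
  obtain ⟨hUE, u, v, huv, hiff⟩ := hU
  rcases u with i | j <;> rcases v with i' | j'
  · exact (huv : False).elim
  · -- u is a leaf: U is a subsingleton
    have hij : (j' : ℕ) = min ((i : ℕ) - 1) (n - 3) := huv
    apply GoodCut.of_subsingleton
    intro x hx x' hx'
    have hxE := hUE hx
    have hx'E := hUE hx'
    have r : ((catG n).deleteEdges {s(Sum.inl i, Sum.inr j')}).Reachable
        (Sum.inl (posFin M hn0 x)) (Sum.inl i) := (hiff x hxE).1 hx
    have r' : ((catG n).deleteEdges {s(Sum.inl i, Sum.inr j')}).Reachable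
        (Sum.inl (posFin M hn0 x')) (Sum.inl i) := (hiff x' hx'E).1 hx'
    have e1 := reachable_eq_of_isolated (catG_leaf_isolated i j' hij) r
    have e2 := reachable_eq_of_isolated (catG_leaf_isolated i j' hij) r'
    exact posFin_injOn hn0 hxE hx'E (Sum.inl.inj (e1.trans e2.symm))
  · -- v is a leaf: the complement of U is a subsingleton
    have hij : (j : ℕ) = min ((i' : ℕ) - 1) (n - 3) := huv
    have hrw : ({s(Sum.inr j, Sum.inl i')} : Set (Sym2 (CatV n)))
        = {s(Sum.inl i', Sum.inr j)} := by rw [Sym2.eq_swap]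
    apply GoodCut.of_compl_subsingleton
    intro z hz z' hz'
    rw [Finset.mem_sdiff] at hz hz'
    have key : ∀ w : α, w ∈ M.toSetSystem.E → w ∉ U → posFin M hn0 w = i' := by
      intro w hwE hwU
      by_contra hne
      apply hwU
      rw [hiff w hwE]
      show ((catG n).deleteEdges {s(Sum.inr j, Sum.inl i')}).Reachable
        (Sum.inl (posFin M hn0 w)) (Sum.inr j)
      rw [hrw]
      exact (leafdel_reach hn3 i' (posFin M hn0 w) j hij).2 hne
    have k1 := key z hz.1 hz.2
    have k2 := key z' hz'.1 hz'.2
    exact posFin_injOn hn0 hz.1 hz'.1 (k1.trans k2.symm)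
  · -- spine edge
    have h' : (j : ℕ) + 1 = j' ∨ (j' : ℕ) + 1 = j := huv
    have hj := j.isLt
    have hj' := j'.isLt
    have hlen : (elist M).length = n := elist_length M
    rcases h' with h' | h'
    · -- u = inr j is the left endpoint : U is the prefix up to j + 1
      refine goodCut_prefix hUE (p := (j : ℕ) + 1) (by omega) ?_
      intro a haE
      rw [hiff a haE]
      show ((catG n).deleteEdges {s(Sum.inr j, Sum.inr j')}).Reachable
          (Sum.inl (posFin M hn0 a)) (Sum.inr j) ↔ (elist M).idxOf a ≤ (j : ℕ) + 1
      constructor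
      · intro r
        have hc := reachable_const (spineSide_const h'.symm) r
        simp only [spineSide, decide_eq_decide] at hc
        rw [← posFin_val hn0 haE]
        omega
      · intro hle
        apply (spineCut_reach h'.symm (Sum.inl (posFin M hn0 a))).1
        simp only [spineSide, decide_eq_true_eq]
        rw [posFin_val hn0 haE]
        omega
    · -- u = inr j is the right endpoint : U is the suffix beyond j' + 1
      have hrw : ({s(Sum.inr j, Sum.inr j')} : Set (Sym2 (CatV n)))
          = {s(Sum.inr j', Sum.inr j)} := by rw [Sym2.eq_swap]
      refine goodCut_suffix hUE (p := (j' : ℕ) + 1) (by omega) ?_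
      intro a haE
      rw [hiff a haE]
      show ((catG n).deleteEdges {s(Sum.inr j, Sum.inr j')}).Reachable
          (Sum.inl (posFin M hn0 a)) (Sum.inr j) ↔ (j' : ℕ) + 1 < (elist M).idxOf a
      rw [hrw]
      constructor
      · intro r
        have hc := reachable_const (spineSide_const h'.symm) r
        simp only [spineSide, decide_eq_decide] at hc
        rw [← posFin_val hn0 haE]
        omega
      · intro hle
        apply (spineCut_reach h'.symm (Sum.inl (posFin M hn0 a))).2
        simp only [spineSide, decide_eq_false_iff_not, not_le]
        rw [posFin_val hn0 haE]
        omega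

lemma top_neighborFinset {m : ℕ} (v : Fin m) :
    (⊤ : SimpleGraph (Fin m)).neighborFinset v = Finset.univ.erase v := by
  ext w
  rw [SimpleGraph.mem_neighborFinset, SimpleGraph.top_adj, Finset.mem_erase]
  simp [ne_comm]

lemma top_degree_fin {m : ℕ} (v : Fin m) :
    (⊤ : SimpleGraph (Fin m)).degree v = m - 1 := by
  rw [SimpleGraph.degree, top_neighborFinset, Finset.card_erase_of_mem (Finset.mem_univ v)]
  simp

lemma top_del_isolated {m : ℕ} (hm : m = 2) (u w : Fin m) (huw : u ≠ w) :
    ∀ b, ¬ ((⊤ : SimpleGraph (Fin m)).deleteEdges {s(u, w)}).Adj u b := by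
  intro b hb
  rw [SimpleGraph.deleteEdges_adj, SimpleGraph.top_adj] at hb
  obtain ⟨hadj, hmem⟩ := hb
  apply hmem
  rw [Set.mem_singleton_iff]
  have hu := u.isLt
  have hw := w.isLt
  have hbb := b.isLt
  have h1 : (u : ℕ) ≠ (b : ℕ) := fun hh => hadj (Fin.ext hh)
  have h2 : (u : ℕ) ≠ (w : ℕ) := fun hh => huw (Fin.ext hh)
  have : b = w := Fin.ext (by omega)
  rw [this]

/-- The path decomposition of a two-element ground set. -/
noncomputable def pathDecomp (M : Matroid α) (h2 : M.toSetSystem.E.card = 2) :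
    Decomp α M.toSetSystem.E where
  V := Fin M.toSetSystem.E.card
  G := ⊤
  isTree := by
    constructor
    · haveI : Nonempty (Fin M.toSetSystem.E.card) := ⟨⟨0, by omega⟩⟩
      exact SimpleGraph.connected_top
    · rw [SimpleGraph.isAcyclic_iff_forall_adj_isBridge]
      intro v w hvw
      rw [SimpleGraph.isBridge_iff]
      intro hre
      have hne : v ≠ w := hvw.ne
      have hx := reachable_eq_of_isolated (top_del_isolated h2 v w hne) hre.symm
      exact hne hx.symm
  subcubic := by
    intro v
    left
    rw [top_degree_fin, h2]
  leaf := fun a => posFin M (by omega) a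
  leaf_degree := by
    intro a _
    rw [top_degree_fin, h2]
  leaf_injOn := by
    intro a ha b hb hab
    exact posFin_injOn _ ha hb hab
  leaf_surj := by
    intro v _
    exact posFin_surj (by omega) v

lemma pathDecomp_good (M : Matroid α) (h2 : M.toSetSystem.E.card = 2)
    (U : Finset α) (hU : (pathDecomp M h2).Displays U) : GoodCut M U := by
  obtain ⟨hUE, u, v, huv, hiff⟩ := hU
  have hne : u ≠ v := huv.ne
  apply GoodCut.of_subsingleton
  intro x hx x' hx'
  have hxE := hUE hx
  have hx'E := hUE hx'
  have hn0 : 0 < M.toSetSystem.E.card := by omega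
  have r : ((⊤ : SimpleGraph (Fin M.toSetSystem.E.card)).deleteEdges {s(u, v)}).Reachable
      (posFin M hn0 x) u := (hiff x hxE).1 hx
  have r' : ((⊤ : SimpleGraph (Fin M.toSetSystem.E.card)).deleteEdges {s(u, v)}).Reachable
      (posFin M hn0 x') u := (hiff x' hx'E).1 hx'
  have e1 := reachable_eq_of_isolated (top_del_isolated h2 u v hne) r
  have e2 := reachable_eq_of_isolated (top_del_isolated h2 u v hne) r'
  exact posFin_injOn hn0 hxE hx'E (e1.trans e2.symm)

lemma rank2_dw_le_five (M : Matroid α) (hr : M.rank M.E = 2) : M.dw ≤ 5 := by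
  have hn2 := two_le_card M hr
  rcases eq_or_lt_of_le hn2 with h2 | h3
  · exact Nat.sInf_le ⟨pathDecomp M h2.symm,
      fun U hU => numClasses_le_five hr (pathDecomp_good M h2.symm U hU)⟩
  · exact Nat.sInf_le ⟨catDecomp M h3,
      fun U hU => numClasses_le_five hr (catDecomp_good M h3 U hU)⟩

end Assembly
/-- every finite matroid of rank two has decomposition-width at most `5`;
consequently the class of rank-two matroids is pigeonhole. -/
theorem statement_18 {α : Type} [Fintype α] :
    (∀ M : Matroid α, M.rank M.E = 2 → M.dw ≤ 5) ∧
      Matroid.PigeonholeClass {M : Matroid α | M.rank M.E = 2} := by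
  constructor
  · intro M hM
    exact rank2_dw_le_five M hM
  · intro lam _
    exact ⟨5, fun M hM _ => rank2_dw_le_five M hM⟩
end

section
/- The class of rank-two matroids is not strongly pigeonhole. Specifically, for every integer t ≥ 2, if M is the rank-two matroid on 2t elements consisting of t parallel pairs (a rank-two simple matroid with t points, each replaced by a parallel pair of elements) and U is a set containing exactly one element from each parallel pair, then λ_M(U) = 2 and the relation ∼_U has at least t equivalence classes. -/
open scoped Classical

/-- Remark `effect`: for the rank-two matroid consisting of `t ≥ 2`
parallel pairs `{a i, b i}`, and `U` a transversal picking exactly one element `c i` from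
each pair, we have `λ_M(U) = 2` while `∼_U` has at least `t` equivalence classes; hence
the class of rank-two matroids is not strongly pigeonhole. -/
theorem statement_19 {α : Type} [Fintype α] (t : ℕ) (ht : 2 ≤ t)
    (M : Matroid α) (a b : Fin t → α)
    (ha : Function.Injective a) (hb : Function.Injective b)
    (hab : ∀ i j : Fin t, a i ≠ b j)
    (hE : M.E = Set.range a ∪ Set.range b)
    (hrank : M.rank M.E = 2)
    (hpair : ∀ i : Fin t, ¬ M.Indep {a i, b i})
    (hnonloop : ∀ i : Fin t, M.Indep {a i} ∧ M.Indep {b i})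
    (hfree : ∀ i j : Fin t, i ≠ j → ∀ x ∈ ({a i, b i} : Set α),
      ∀ y ∈ ({a j, b j} : Set α), M.Indep {x, y})
    (c : Fin t → α) (hc : ∀ i : Fin t, c i = a i ∨ c i = b i)
    (U : Finset α) (hU : ↑U = Set.range c) :
    M.lambda ↑U = 2 ∧ t ≤ M.toSetSystem.numClasses U := by
  classical
  set d : Fin t → α := fun i => if c i = a i then b i else a i with hd_def
  have hd : ∀ i, (c i = a i ∧ d i = b i) ∨ (c i = b i ∧ d i = a i) := by
    intro i
    rcases hc i with h | h
    · exact Or.inl ⟨h, by simp [hd_def, h]⟩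
    · refine Or.inr ⟨h, ?_⟩
      have hne : c i ≠ a i := by rw [h]; exact Ne.symm (hab i i)
      simp [hd_def, hne]
  have hcmem : ∀ i, c i ∈ ({a i, b i} : Set α) := by
    intro i; rcases hc i with h | h <;> simp [h]
  have hdmem : ∀ i, d i ∈ ({a i, b i} : Set α) := by
    intro i; rcases hd i with ⟨_, h⟩ | ⟨_, h⟩ <;> simp [h]
  have hcross : ∀ i j : Fin t, i ≠ j → ∀ x ∈ ({a i, b i} : Set α),
      ∀ y ∈ ({a j, b j} : Set α), x ≠ y := by
    intro i j hij x hx y hy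
    rcases hx with rfl | rfl <;> rcases hy with rfl | rfl
    · exact fun h => hij (ha h)
    · exact hab i j
    · exact Ne.symm (hab j i)
    · exact fun h => hij (hb h)
  have hcinj : Function.Injective c := by
    intro i j h
    by_contra hij
    exact hcross i j hij (c i) (hcmem i) (c j) (hcmem j) h
  have hdc : ∀ i, d i ≠ c i := by
    intro i
    rcases hd i with ⟨h1, h2⟩ | ⟨h1, h2⟩
    · rw [h1, h2]; exact Ne.symm (hab i i)
    · rw [h1, h2]; exact hab i i
  have hd_not_U : ∀ i, d i ∉ (↑U : Set α) := by
    intro i hmem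
    rw [hU] at hmem
    obtain ⟨j, hj⟩ := hmem
    by_cases hij : j = i
    · subst hij; exact hdc j hj.symm
    · exact hcross j i hij (c j) (hcmem j) (d i) (hdmem i) hj
  have hcE : ∀ i, c i ∈ M.E := by
    intro i; rw [hE]
    rcases hc i with h | h
    · exact Or.inl ⟨i, h.symm⟩
    · exact Or.inr ⟨i, h.symm⟩
  have hdE : ∀ i, d i ∈ M.E := by
    intro i; rw [hE]
    rcases hd i with ⟨_, h⟩ | ⟨_, h⟩
    · exact Or.inr ⟨i, h.symm⟩
    · exact Or.inl ⟨i, h.symm⟩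
  have hbdd : ∀ W : Set α,
      BddAbove {n : ℕ | ∃ X : Finset α, ↑X ⊆ W ∧ M.Indep ↑X ∧ X.card = n} := by
    intro W
    refine ⟨Fintype.card α, ?_⟩
    rintro n ⟨X, -, -, rfl⟩
    simpa using X.card_le_univ
  have hcard2 : ∀ X : Finset α, M.Indep ↑X → X.card ≤ 2 := by
    intro X hX
    have hm : X.card ∈ {n : ℕ | ∃ Y : Finset α, ↑Y ⊆ M.E ∧ M.Indep ↑Y ∧ Y.card = n} :=
      ⟨X, hX.subset_ground, hX, rfl⟩
    have h := le_csSup (hbdd M.E) hm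
    simp only [Matroid.rank] at hrank
    exact hrank ▸ h
  have hrk : ∀ (W : Set α) (x y : α), x ∈ W → y ∈ W → x ≠ y → M.Indep {x, y} →
      M.rank W = 2 := by
    intro W x y hx hy hxy hind
    have hmem2 : 2 ∈ {n : ℕ | ∃ X : Finset α, ↑X ⊆ W ∧ M.Indep ↑X ∧ X.card = n} := by
      refine ⟨{x, y}, ?_, ?_, Finset.card_pair hxy⟩
      · simp [Set.insert_subset_iff, hx, hy]
      · simpa using hind
    rw [Matroid.rank]
    refine le_antisymm ?_ (le_csSup (hbdd W) hmem2)
    refine csSup_le ⟨2, hmem2⟩ ?_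
    rintro n ⟨X, -, hXind, rfl⟩
    exact hcard2 X hXind
  set i0 : Fin t := ⟨0, by omega⟩ with hi0_def
  set i1 : Fin t := ⟨1, by omega⟩ with hi1_def
  have hi01 : i0 ≠ i1 := Fin.ne_of_val_ne (by simp [hi0_def, hi1_def])
  have h1 : M.rank ↑U = 2 := by
    refine hrk ↑U (c i0) (c i1) ?_ ?_ (fun h => hi01 (hcinj h)) ?_
    · rw [hU]; exact ⟨i0, rfl⟩
    · rw [hU]; exact ⟨i1, rfl⟩
    · exact hfree i0 i1 hi01 (c i0) (hcmem i0) (c i1) (hcmem i1)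
  have h2 : M.rank (M.E \ ↑U) = 2 := by
    refine hrk _ (d i0) (d i1) ⟨hdE i0, hd_not_U i0⟩ ⟨hdE i1, hd_not_U i1⟩
      (hcross i0 i1 hi01 (d i0) (hdmem i0) (d i1) (hdmem i1))
      (hfree i0 i1 hi01 (d i0) (hdmem i0) (d i1) (hdmem i1))
  have hlam : M.lambda ↑U = 2 := by
    rw [Matroid.lambda, h1, h2, hrank]
  refine ⟨hlam, ?_⟩
  set S := M.toSetSystem with hS_def
  have hcU : ∀ i, c i ∈ U := by
    intro i
    rw [← Finset.mem_coe, hU]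
    exact ⟨i, rfl⟩
  have hsub : ∀ i, ({c i} : Finset α) ⊆ U := fun i =>
    Finset.singleton_subset_iff.2 (hcU i)
  set f : Fin t → Quotient (S.eqvSetoid U) :=
    fun i => Quotient.mk (S.eqvSetoid U) ⟨{c i}, hsub i⟩ with hf_def
  have hfinj : Function.Injective f := by
    intro i j h
    by_contra hij
    have heqv : S.Eqv U {c i} {c j} := Quotient.exact h
    have hZ : ({d i} : Finset α) ⊆ S.E \ U := by
      rw [Finset.singleton_subset_iff, Finset.mem_sdiff]
      refine ⟨?_, fun hmem => hd_not_U i (Finset.mem_coe.2 hmem)⟩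
      simp only [hS_def, Matroid.toSetSystem, Set.Finite.mem_toFinset]
      exact hdE i
    have hiff := heqv {d i} hZ
    have hRHS : ({c j} ∪ {d i} : Finset α) ∈ S.Ind := by
      show M.Indep ↑({c j} ∪ {d i} : Finset α)
      have hcoe : (↑({c j} ∪ {d i} : Finset α) : Set α) = {c j, d i} := by
        rw [Finset.coe_union, Finset.coe_singleton, Finset.coe_singleton,
          Set.singleton_union]
      rw [hcoe]
      exact hfree j i (Ne.symm hij) (c j) (hcmem j) (d i) (hdmem i)
    have hLHS : M.Indep (↑({c i} ∪ {d i} : Finset α)) := hiff.mpr hRHS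
    have hset : (↑({c i} ∪ {d i} : Finset α) : Set α) = {a i, b i} := by
      rcases hd i with ⟨hc1, hd1⟩ | ⟨hc1, hd1⟩ <;>
        simp [hc1, hd1, Set.pair_comm]
    rw [hset] at hLHS
    exact hpair i hLHS
  calc t = Nat.card (Fin t) := by simp
    _ ≤ Nat.card (Quotient (S.eqvSetoid U)) := Nat.card_le_card_of_injective f hfinj
end
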